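/- arXiv:0806.2014 — 6 statements merged into one kernel-verified Lean document; each statement's English description precedes it below -/
import Mathlib

section
/- For every positive integer n, every real t > 0, and every integer x, one has (1/n) · ∑_{k=0}^{n−1} exp(−(2 − 2cos(2πk/n))·t) · exp(2πi·k·x/n) = e^{−2t} · ∑_{j∈ℤ} I_{x+jn}(2t), where the series on the right converges absolutely. -/
open MeasureTheory Real Filter

/-- The modified `I`-Bessel function of integer order `x`, via its integral
representation `I_x(t) = (1/π) ∫_0^π e^{t cos θ} cos(xθ) dθ`. -/
noncomputable def besselI (x : ℤ) (t : ℝ) : ℝ :=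
  (1 / Real.pi) * ∫ θ in (0:ℝ)..Real.pi, Real.exp (t * Real.cos θ) * Real.cos ((x : ℝ) * θ)

lemma besselI_neg (x : ℤ) (t : ℝ) : besselI (-x) t = besselI x t := by
  unfold besselI
  congr 1
  refine intervalIntegral.integral_congr fun θ _ => ?_
  push_cast
  rw [neg_mul, Real.cos_neg]

lemma dft_sum (n : ℕ) (hn : 0 < n) (r : ℤ) :
    ∑ k ∈ Finset.range n, Complex.exp (2 * Real.pi * Complex.I * k * r / n)
      = if (n:ℤ) ∣ r then (n:ℂ) else 0 := by
  have hn' : (n:ℂ) ≠ 0 := Nat.cast_ne_zero.mpr hn.ne'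
  have h2 : (2:ℂ) * Real.pi * Complex.I ≠ 0 := by
    simp [Complex.I_ne_zero, Real.pi_ne_zero]
  set z : ℂ := Complex.exp (2 * Real.pi * Complex.I * r / n) with hz
  have hexp : ∀ k ∈ Finset.range n, Complex.exp (2 * Real.pi * Complex.I * k * r / n) = z ^ k := by
    intro k _
    rw [hz, ← Complex.exp_nat_mul]
    congr 1
    field_simp
  rw [Finset.sum_congr rfl hexp]
  by_cases hdvd : (n:ℤ) ∣ r
  · obtain ⟨d, rfl⟩ := hdvd
    have hz1 : z = 1 := by
      rw [hz]
      have h4 : (2 : ℂ) * Real.pi * Complex.I * ((n:ℤ)*d : ℤ) / n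
          = d * (2 * Real.pi * Complex.I) := by
        push_cast
        field_simp
      rw [h4, Complex.exp_int_mul_two_pi_mul_I]
    rw [hz1]
    simp
  · have hz1 : z ≠ 1 := by
      intro h
      rw [hz, Complex.exp_eq_one_iff] at h
      obtain ⟨k, hk⟩ := h
      apply hdvd
      refine ⟨k, ?_⟩
      have h3 : (2*(Real.pi:ℂ)*Complex.I) * r = (2*(Real.pi:ℂ)*Complex.I) * (k*n) := by
        field_simp at hk
        linear_combination (2*(Real.pi:ℂ)*Complex.I) * hk
      have := mul_left_cancel₀ h2 h3
      rw [mul_comm]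
      exact_mod_cast this
    have hzn : z ^ n = 1 := by
      rw [hz, ← Complex.exp_nat_mul]
      have h5 : (n:ℂ) * (2 * Real.pi * Complex.I * r / n) = r * (2 * Real.pi * Complex.I) := by
        field_simp
      rw [h5, Complex.exp_int_mul_two_pi_mul_I]
    rw [geom_sum_eq hz1, hzn]
    simp [hdvd]

lemma besselI_bound (s : ℝ) (m : ℤ) (hm : m ≠ 0) :
    |besselI m s| ≤ (|s| + s ^ 2) * Real.exp |s| / (m:ℝ) ^ 2 := by
  set c : ℝ := (m : ℝ) with hc
  have hc0 : c ≠ 0 := by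
    rw [hc]; exact Int.cast_ne_zero.mpr hm
  have hc2 : (0:ℝ) < c ^ 2 := lt_of_le_of_ne (sq_nonneg c) (Ne.symm (pow_ne_zero 2 hc0))
  set u : ℝ → ℝ := fun θ => Real.exp (s * Real.cos θ) with hu_def
  set u' : ℝ → ℝ := fun θ => Real.exp (s * Real.cos θ) * (s * -Real.sin θ) with hu'_def
  set u2' : ℝ → ℝ := fun θ =>
    Real.exp (s * Real.cos θ) * (s * -Real.sin θ) * (s * -Real.sin θ)
      + Real.exp (s * Real.cos θ) * (s * -Real.cos θ) with hu2'_def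
  have hcmul : ∀ θ : ℝ, HasDerivAt (fun θ : ℝ => c * θ) c θ := fun θ => by
    simpa using (hasDerivAt_id θ).const_mul c
  have hu : ∀ θ : ℝ, HasDerivAt u (u' θ) θ := fun θ =>
    ((Real.hasDerivAt_cos θ).const_mul s).exp
  have hu2 : ∀ θ : ℝ, HasDerivAt u' (u2' θ) θ := fun θ => by
    have h1 : HasDerivAt (fun θ : ℝ => s * -Real.sin θ) (s * -Real.cos θ) θ :=
      (Real.hasDerivAt_sin θ).neg.const_mul s
    exact (hu θ).mul h1
  have hv : ∀ θ : ℝ, HasDerivAt (fun θ => Real.sin (c * θ) / c) (Real.cos (c * θ)) θ := by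
    intro θ
    have := ((hcmul θ).sin).div_const c
    simpa [mul_div_cancel_right₀ _ hc0] using this
  have hv2 : ∀ θ : ℝ, HasDerivAt (fun θ => -Real.cos (c * θ) / c) (Real.sin (c * θ)) θ := by
    intro θ
    have h := ((hcmul θ).cos).neg.div_const c
    convert h using 1
    · rfl
    · rfl
    · rfl
    field_simp
  have hcont : ∀ f : ℝ → ℝ, Continuous f → IntervalIntegrable f volume 0 π :=
    fun f hf => hf.intervalIntegrable 0 π
  have hcont_u' : Continuous u' := by fun_prop
  have hcont_u2' : Continuous u2' := by fun_prop
  have ibp1 : ∫ θ in (0:ℝ)..π, u θ * Real.cos (c * θ)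
      = -∫ θ in (0:ℝ)..π, u' θ * (Real.sin (c * θ) / c) := by
    have h := intervalIntegral.integral_mul_deriv_eq_deriv_mul
      (u := u) (v := fun θ => Real.sin (c * θ) / c) (u' := u') (v' := fun θ => Real.cos (c * θ))
      (fun θ _ => hu θ) (fun θ _ => hv θ) (hcont _ hcont_u') ((Real.continuous_cos.comp
        (continuous_const.mul continuous_id)).intervalIntegrable 0 π)
    rw [h]
    have hsin : Real.sin (c * π) = 0 := by
      rw [hc]; exact Real.sin_int_mul_pi m
    simp [hsin]
  have ibp2 : ∫ θ in (0:ℝ)..π, u' θ * Real.sin (c * θ)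
      = -∫ θ in (0:ℝ)..π, u2' θ * (-Real.cos (c * θ) / c) := by
    have h := intervalIntegral.integral_mul_deriv_eq_deriv_mul
      (u := u') (v := fun θ => -Real.cos (c * θ) / c) (u' := u2')
      (v' := fun θ => Real.sin (c * θ))
      (fun θ _ => hu2 θ) (fun θ _ => hv2 θ) (hcont _ hcont_u2') ((Real.continuous_sin.comp
        (continuous_const.mul continuous_id)).intervalIntegrable 0 π)
    rw [h]
    simp [hu'_def]
  have key : ∫ θ in (0:ℝ)..π, u θ * Real.cos (c * θ)
      = -((1 / c ^ 2) * ∫ θ in (0:ℝ)..π, u2' θ * Real.cos (c * θ)) := by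
    rw [ibp1]
    have e1 : ∀ θ ∈ Set.uIcc (0:ℝ) π, u' θ * (Real.sin (c * θ) / c)
        = (1/c) * (u' θ * Real.sin (c * θ)) := fun θ _ => by ring
    rw [intervalIntegral.integral_congr e1, intervalIntegral.integral_const_mul, ibp2]
    have e2 : ∀ θ ∈ Set.uIcc (0:ℝ) π, u2' θ * (-Real.cos (c * θ) / c)
        = (-(1/c)) * (u2' θ * Real.cos (c * θ)) := fun θ _ => by ring
    rw [intervalIntegral.integral_congr e2, intervalIntegral.integral_const_mul]
    ring
  have hbound : ∀ θ ∈ Set.uIoc (0:ℝ) π,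
      ‖u2' θ * Real.cos (c * θ)‖ ≤ (|s| + s ^ 2) * Real.exp |s| := by
    intro θ _
    have hexp : Real.exp (s * Real.cos θ) ≤ Real.exp |s| := by
      apply Real.exp_le_exp.mpr
      calc s * Real.cos θ ≤ |s * Real.cos θ| := le_abs_self _
        _ = |s| * |Real.cos θ| := abs_mul _ _
        _ ≤ |s| * 1 := mul_le_mul_of_nonneg_left (Real.abs_cos_le_one θ) (abs_nonneg s)
        _ = |s| := mul_one _
    have hexp0 : (0:ℝ) < Real.exp (s * Real.cos θ) := Real.exp_pos _
    have habs1 : |s * -Real.sin θ| ≤ |s| := by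
      rw [abs_mul, abs_neg]
      calc |s| * |Real.sin θ| ≤ |s| * 1 :=
            mul_le_mul_of_nonneg_left (Real.abs_sin_le_one θ) (abs_nonneg s)
        _ = |s| := mul_one _
    have habs2 : |s * -Real.cos θ| ≤ |s| := by
      rw [abs_mul, abs_neg]
      calc |s| * |Real.cos θ| ≤ |s| * 1 :=
            mul_le_mul_of_nonneg_left (Real.abs_cos_le_one θ) (abs_nonneg s)
        _ = |s| := mul_one _
    have hss : |s| * |s| = s ^ 2 := by rw [← sq_abs]; ring
    rw [Real.norm_eq_abs]
    calc |u2' θ * Real.cos (c * θ)| = |u2' θ| * |Real.cos (c * θ)| := abs_mul _ _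
      _ ≤ |u2' θ| * 1 := mul_le_mul_of_nonneg_left (Real.abs_cos_le_one _) (abs_nonneg _)
      _ = |u2' θ| := mul_one _
      _ ≤ |Real.exp (s * Real.cos θ) * (s * -Real.sin θ) * (s * -Real.sin θ)|
            + |Real.exp (s * Real.cos θ) * (s * -Real.cos θ)| := by
          rw [hu2'_def]; exact abs_add_le _ _
      _ ≤ Real.exp |s| * |s| * |s| + Real.exp |s| * |s| := by
          have e3 : |Real.exp (s * Real.cos θ) * (s * -Real.sin θ) * (s * -Real.sin θ)|
              = Real.exp (s * Real.cos θ) * |s * -Real.sin θ| * |s * -Real.sin θ| := by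
            rw [abs_mul, abs_mul, abs_of_pos hexp0]
          have e4 : |Real.exp (s * Real.cos θ) * (s * -Real.cos θ)|
              = Real.exp (s * Real.cos θ) * |s * -Real.cos θ| := by
            rw [abs_mul, abs_of_pos hexp0]
          rw [e3, e4]
          gcongr
      _ = (|s| + s ^ 2) * Real.exp |s| := by rw [mul_assoc, hss]; ring
  have hJ : |∫ θ in (0:ℝ)..π, u2' θ * Real.cos (c * θ)| ≤ (|s| + s ^ 2) * Real.exp |s| * π := by
    have h := intervalIntegral.norm_integral_le_of_norm_le_const hbound
    simpa [Real.norm_eq_abs, abs_of_pos Real.pi_pos] using h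
  have hπ : (0:ℝ) < π := Real.pi_pos
  have hB : besselI m s = (1/π) * (-((1/c^2) * ∫ θ in (0:ℝ)..π, u2' θ * Real.cos (c * θ))) := by
    rw [besselI, ← key]
  rw [hB, abs_mul, abs_neg, abs_mul, abs_of_pos (by positivity : (0:ℝ) < 1/π),
    abs_of_pos (by positivity : (0:ℝ) < 1/c^2)]
  calc 1/π * (1/c^2 * |∫ θ in (0:ℝ)..π, u2' θ * Real.cos (c * θ)|)
      ≤ 1/π * (1/c^2 * ((|s| + s ^ 2) * Real.exp |s| * π)) := by gcongr
    _ = (|s| + s ^ 2) * Real.exp |s| / c ^ 2 := by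
        field_simp

lemma besselI_summable (s : ℝ) : Summable fun m : ℤ => |besselI m s| := by
  set C : ℝ := (|s| + s ^ 2) * Real.exp |s| with hC
  have hC0 : 0 ≤ C := by positivity
  have h1 : Summable fun m : ℤ => C * (1 / (m:ℝ) ^ 2) :=
    (summable_one_div_int_pow.mpr one_lt_two).mul_left C
  have h2 : Summable fun m : ℤ => (if m = 0 then |besselI 0 s| else 0) :=
    (hasSum_ite_eq 0 _).summable
  refine Summable.of_nonneg_of_le (fun m => abs_nonneg _) (fun m => ?_) (h1.add h2)
  by_cases h : m = 0
  · subst h; simp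
  · simp only [h, if_false, add_zero]
    calc |besselI m s| ≤ C / (m:ℝ) ^ 2 := besselI_bound s m h
      _ = C * (1 / (m:ℝ) ^ 2) := by ring

lemma besselI_hasSum (s : ℝ) (θ0 : ℝ) :
    HasSum (fun m : ℤ => (besselI m s : ℂ) * Complex.exp (Complex.I * m * θ0))
      ((Real.exp (s * Real.cos θ0) : ℂ)) := by
  haveI : Fact (0 < 2 * Real.pi) := ⟨by positivity⟩
  have hπ : Real.pi ≠ 0 := Real.pi_ne_zero
  have hπc : (Real.pi : ℂ) ≠ 0 := Complex.ofReal_ne_zero.mpr hπ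
  have per : Function.Periodic (fun θ : ℝ => (Real.exp (s * Real.cos θ) : ℂ)) (2 * Real.pi) := by
    intro θ; simp [Real.cos_add_two_pi]
  have hcont : Continuous (fun θ : ℝ => (Real.exp (s * Real.cos θ) : ℂ)) := by fun_prop
  let f : C(AddCircle (2 * Real.pi), ℂ) := ⟨per.lift, hcont.quotient_liftOn' _⟩
  have hf : ∀ θ : ℝ, f (θ : AddCircle (2 * Real.pi)) = (Real.exp (s * Real.cos θ) : ℂ) :=
    fun θ => rfl
  have hcos2pi : ∀ m : ℤ, Real.cos ((m:ℝ) * (2 * Real.pi)) = 1 := fun m =>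
    Real.cos_int_mul_two_pi m
  have hsin2pi : ∀ m : ℤ, Real.sin ((m:ℝ) * (2 * Real.pi)) = 0 := by
    intro m
    have h : (m:ℝ) * (2 * Real.pi) = ((2*m : ℤ):ℝ) * Real.pi := by push_cast; ring
    rw [h, Real.sin_int_mul_pi]
  -- compute Fourier coefficients
  have hcoeff : ∀ m : ℤ, fourierCoeff (⇑f) m = (besselI m s : ℂ) := by
    intro m
    rw [fourierCoeff_eq_intervalIntegral (⇑f) m 0]
    have hpt : ∀ θ ∈ Set.uIcc (0:ℝ) (0 + 2 * Real.pi),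
        (fourier (-m) (θ : AddCircle (2 * Real.pi)) : ℂ) • f (θ : AddCircle (2 * Real.pi))
          = ((Real.exp (s * Real.cos θ) * Real.cos ((m:ℝ) * θ) : ℝ) : ℂ)
            - ((Real.exp (s * Real.cos θ) * Real.sin ((m:ℝ) * θ) : ℝ) : ℂ) * Complex.I := by
      intro θ _
      rw [smul_eq_mul, fourier_coe_apply, hf θ]
      have harg : 2 * (Real.pi:ℂ) * Complex.I * ((-m : ℤ):ℂ) * (θ:ℂ) / ((2 * Real.pi : ℝ):ℂ)
          = ((-((m:ℝ) * θ) : ℝ) : ℂ) * Complex.I := by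
        push_cast
        field_simp
      rw [harg, Complex.exp_mul_I, ← Complex.ofReal_cos, ← Complex.ofReal_sin,
        Real.cos_neg, Real.sin_neg]
      push_cast
      ring
    rw [intervalIntegral.integral_congr hpt]
    have hint1 : IntervalIntegrable
        (fun θ => ((Real.exp (s * Real.cos θ) * Real.cos ((m:ℝ) * θ) : ℝ) : ℂ))
        volume 0 (0 + 2 * Real.pi) := by
      apply Continuous.intervalIntegrable; fun_prop
    have hint2 : IntervalIntegrable
        (fun θ => ((Real.exp (s * Real.cos θ) * Real.sin ((m:ℝ) * θ) : ℝ) : ℂ) * Complex.I)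
        volume 0 (0 + 2 * Real.pi) := by
      apply Continuous.intervalIntegrable; fun_prop
    rw [intervalIntegral.integral_sub hint1 hint2, intervalIntegral.integral_mul_const,
      intervalIntegral.integral_ofReal, intervalIntegral.integral_ofReal]
    -- reflection identities
    have hIcos1 : IntervalIntegrable
        (fun θ => Real.exp (s * Real.cos θ) * Real.cos ((m:ℝ) * θ)) volume 0 Real.pi := by
      apply Continuous.intervalIntegrable; fun_prop
    have hIcos2 : IntervalIntegrable
        (fun θ => Real.exp (s * Real.cos θ) * Real.cos ((m:ℝ) * θ)) volume Real.pi
        (2 * Real.pi) := by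
      apply Continuous.intervalIntegrable; fun_prop
    have hIsin1 : IntervalIntegrable
        (fun θ => Real.exp (s * Real.cos θ) * Real.sin ((m:ℝ) * θ)) volume 0 Real.pi := by
      apply Continuous.intervalIntegrable; fun_prop
    have hIsin2 : IntervalIntegrable
        (fun θ => Real.exp (s * Real.cos θ) * Real.sin ((m:ℝ) * θ)) volume Real.pi
        (2 * Real.pi) := by
      apply Continuous.intervalIntegrable; fun_prop
    have hswap : ∀ g : ℝ → ℝ, (∫ θ in (0:ℝ)..Real.pi, g (2 * Real.pi - θ))
        = ∫ θ in Real.pi..(2 * Real.pi), g θ := by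
      intro g
      have h := intervalIntegral.integral_comp_sub_left (a := (0:ℝ)) (b := Real.pi) g
        (2 * Real.pi)
      have e1 : 2 * Real.pi - Real.pi = Real.pi := by ring
      have e2 : 2 * Real.pi - 0 = 2 * Real.pi := by ring
      rw [e1, e2] at h
      exact h
    have refl_cos : ∫ θ in (0:ℝ)..(0 + 2 * Real.pi),
        Real.exp (s * Real.cos θ) * Real.cos ((m:ℝ) * θ)
        = 2 * ∫ θ in (0:ℝ)..Real.pi, Real.exp (s * Real.cos θ) * Real.cos ((m:ℝ) * θ) := by
      rw [zero_add, ← intervalIntegral.integral_add_adjacent_intervals hIcos1 hIcos2]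
      rw [← hswap (fun θ => Real.exp (s * Real.cos θ) * Real.cos ((m:ℝ) * θ))]
      have hpt2 : ∀ θ ∈ Set.uIcc (0:ℝ) Real.pi,
          Real.exp (s * Real.cos (2 * Real.pi - θ)) * Real.cos ((m:ℝ) * (2 * Real.pi - θ))
          = Real.exp (s * Real.cos θ) * Real.cos ((m:ℝ) * θ) := by
        intro θ _
        rw [Real.cos_two_pi_sub]
        congr 1
        have h3 : (m:ℝ) * (2 * Real.pi - θ) = (m:ℝ) * (2 * Real.pi) - (m:ℝ) * θ := by ring
        rw [h3, Real.cos_sub, hcos2pi m, hsin2pi m]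
        ring
      rw [intervalIntegral.integral_congr hpt2]
      ring
    have refl_sin : ∫ θ in (0:ℝ)..(0 + 2 * Real.pi),
        Real.exp (s * Real.cos θ) * Real.sin ((m:ℝ) * θ) = 0 := by
      rw [zero_add, ← intervalIntegral.integral_add_adjacent_intervals hIsin1 hIsin2]
      rw [← hswap (fun θ => Real.exp (s * Real.cos θ) * Real.sin ((m:ℝ) * θ))]
      have hpt2 : ∀ θ ∈ Set.uIcc (0:ℝ) Real.pi,
          Real.exp (s * Real.cos (2 * Real.pi - θ)) * Real.sin ((m:ℝ) * (2 * Real.pi - θ))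
          = -(Real.exp (s * Real.cos θ) * Real.sin ((m:ℝ) * θ)) := by
        intro θ _
        rw [Real.cos_two_pi_sub]
        have h3 : (m:ℝ) * (2 * Real.pi - θ) = (m:ℝ) * (2 * Real.pi) - (m:ℝ) * θ := by ring
        rw [h3, Real.sin_sub, hcos2pi m, hsin2pi m]
        ring
      rw [intervalIntegral.integral_congr hpt2, intervalIntegral.integral_neg]
      ring
    rw [refl_cos, refl_sin]
    simp only [Complex.ofReal_zero, zero_mul, sub_zero]
    rw [Complex.real_smul, ← Complex.ofReal_mul]
    have heq : (1:ℝ)/(2 * Real.pi) * (2 * ∫ θ in (0:ℝ)..Real.pi,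
        Real.exp (s * Real.cos θ) * Real.cos ((m:ℝ) * θ)) = besselI m s := by
      rw [besselI]
      field_simp
    rw [heq]
  -- summability of Fourier coefficients
  have hsum : Summable (fourierCoeff (⇑f)) := by
    apply Summable.of_norm
    have h : (fun m : ℤ => ‖fourierCoeff (⇑f) m‖) = fun m : ℤ => |besselI m s| := by
      funext m; rw [hcoeff m, Complex.norm_real, Real.norm_eq_abs]
    rw [h]
    exact besselI_summable s
  have h := has_pointwise_sum_fourier_series_of_summable hsum (θ0 : AddCircle (2 * Real.pi))
  have hfun : (fun m : ℤ => fourierCoeff (⇑f) m • fourier m (θ0 : AddCircle (2 * Real.pi)))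
      = fun m : ℤ => (besselI m s : ℂ) * Complex.exp (Complex.I * m * θ0) := by
    funext m
    rw [hcoeff m, smul_eq_mul, fourier_coe_apply]
    have harg2 : 2 * (Real.pi:ℂ) * Complex.I * (m:ℂ) * (θ0:ℂ) / ((2 * Real.pi : ℝ):ℂ)
        = Complex.I * (m:ℂ) * (θ0:ℂ) := by
      rw [div_eq_iff (Complex.ofReal_ne_zero.mpr (ne_of_gt (by positivity : (0:ℝ) < 2 * Real.pi)))]
      push_cast
      ring
    rw [harg2]
  rw [hfun] at h
  exact h

/-- Theta inversion formula for the heat kernel on the discrete circle `nℤ\ℤ`. -/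
theorem theta_inversion_discrete_circle (n : ℕ) (hn : 0 < n) (t : ℝ) (ht : 0 < t) (x : ℤ) :
    Summable (fun j : ℤ => |besselI (x + j * n) (2 * t)|) ∧
    (1 / (n : ℂ)) * ∑ k ∈ Finset.range n,
        Complex.exp (((-(2 - 2 * Real.cos (2 * Real.pi * k / n)) * t : ℝ) : ℂ)) *
          Complex.exp (2 * Real.pi * Complex.I * (k : ℂ) * (x : ℂ) / (n : ℂ))
      = ((Real.exp (-(2 * t)) : ℝ) : ℂ) * ∑' j : ℤ, ((besselI (x + j * n) (2 * t) : ℝ) : ℂ) := by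
  have hnZ : (n:ℤ) ≠ 0 := Int.natCast_ne_zero.mpr hn.ne'
  have hnC : (n:ℂ) ≠ 0 := Nat.cast_ne_zero.mpr hn.ne'
  set s : ℝ := 2 * t with hs
  have hinj : Function.Injective (fun j : ℤ => x + j * (n:ℤ)) := by
    intro a b hab
    simp only at hab
    have h1 : a * (n:ℤ) = b * n := by omega
    exact mul_right_cancel₀ hnZ h1
  have hsummable : Summable (fun j : ℤ => |besselI (x + j * n) s|) :=
    (besselI_summable s).comp_injective hinj
  refine ⟨hsummable, ?_⟩
  -- the key HasSum for each k
  have hkey : ∀ k ∈ Finset.range n,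
      HasSum (fun m : ℤ => (besselI m s : ℂ)
          * Complex.exp (2 * Real.pi * Complex.I * (k:ℂ) * ((m + x : ℤ):ℂ) / (n:ℂ)))
        ((Real.exp (s * Real.cos (2 * Real.pi * k / n)) : ℂ)
          * Complex.exp (2 * Real.pi * Complex.I * (k:ℂ) * (x:ℂ) / (n:ℂ))) := by
    intro k _
    have h := (besselI_hasSum s (2 * Real.pi * k / n)).mul_right
      (Complex.exp (2 * Real.pi * Complex.I * (k:ℂ) * (x:ℂ) / (n:ℂ)))
    have e : (fun m : ℤ => (besselI m s : ℂ)
          * Complex.exp (Complex.I * m * ((2 * Real.pi * k / n : ℝ):ℂ))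
          * Complex.exp (2 * Real.pi * Complex.I * (k:ℂ) * (x:ℂ) / (n:ℂ)))
        = fun m : ℤ => (besselI m s : ℂ)
          * Complex.exp (2 * Real.pi * Complex.I * (k:ℂ) * ((m + x : ℤ):ℂ) / (n:ℂ)) := by
      funext m
      rw [mul_assoc, ← Complex.exp_add]
      congr 2
      push_cast
      field_simp
    rw [e] at h
    exact h
  have H := (hasSum_sum hkey).mul_left (1/(n:ℂ))
  -- simplify the function under HasSum
  have hpt : (fun m : ℤ => (1/(n:ℂ)) * ∑ k ∈ Finset.range n, (besselI m s : ℂ)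
        * Complex.exp (2 * Real.pi * Complex.I * (k:ℂ) * ((m + x : ℤ):ℂ) / (n:ℂ)))
      = fun m : ℤ => (if (n:ℤ) ∣ (m + x) then (besselI m s : ℂ) else 0) := by
    funext m
    rw [← Finset.mul_sum, dft_sum n hn (m + x)]
    by_cases hd : (n:ℤ) ∣ (m + x)
    · rw [if_pos hd, if_pos hd]
      field_simp
    · rw [if_neg hd, if_neg hd]
      simp
  rw [hpt] at H
  -- identify the tsum with the sum over the coset
  set g : ℤ → ℂ := fun m => (if (n:ℤ) ∣ (m + x) then (besselI m s : ℂ) else 0) with hg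
  have hinj2 : Function.Injective (fun j : ℤ => -x + j * (n:ℤ)) := by
    intro a b hab
    simp only at hab
    have h1 : a * (n:ℤ) = b * n := by omega
    exact mul_right_cancel₀ hnZ h1
  have hsupp : Function.support g ⊆ Set.range (fun j : ℤ => -x + j * (n:ℤ)) := by
    intro m hm
    rw [Function.mem_support] at hm
    by_cases hd : (n:ℤ) ∣ (m + x)
    · obtain ⟨d, hd'⟩ := hd
      exact ⟨d, show -x + d * (n:ℤ) = m by rw [mul_comm]; omega⟩
    · exact absurd (by rw [hg]; simp [hd]) hm
  have h3 : ∑' j : ℤ, g (-x + j * n) = ∑' m : ℤ, g m := hinj2.tsum_eq hsupp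
  have h4 : (fun j : ℤ => g (-x + j * n)) = fun j : ℤ => (besselI (x - j * n) s : ℂ) := by
    funext j
    rw [hg]
    simp only
    rw [if_pos ⟨j, by ring⟩]
    congr 1
    rw [show -x + j * (n:ℤ) = -(x - j * n) by ring, besselI_neg]
  have h5 : ∑' j : ℤ, (besselI (x - j * n) s : ℂ) = ∑' j : ℤ, (besselI (x + j * n) s : ℂ) := by
    have he := (Equiv.neg ℤ).tsum_eq (f := fun j : ℤ => (besselI (x + j * n) s : ℂ))
    have e2 : (fun j : ℤ => (besselI (x + (Equiv.neg ℤ) j * n) s : ℂ))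
        = fun j : ℤ => (besselI (x - j * n) s : ℂ) := by
      funext j
      congr 2
      simp [Equiv.neg_apply]
      ring
    rw [e2] at he
    exact he
  -- rewrite the left-hand side
  have hLHS : ∀ k ∈ Finset.range n,
      Complex.exp (((-(2 - 2 * Real.cos (2 * Real.pi * k / n)) * t : ℝ) : ℂ))
          * Complex.exp (2 * Real.pi * Complex.I * (k:ℂ) * (x:ℂ) / (n:ℂ))
      = ((Real.exp (-(2 * t)) : ℝ) : ℂ) * ((Real.exp (s * Real.cos (2 * Real.pi * k / n)) : ℂ)
          * Complex.exp (2 * Real.pi * Complex.I * (k:ℂ) * (x:ℂ) / (n:ℂ))) := by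
    intro k _
    rw [← Complex.ofReal_exp,
      show (-(2 - 2 * Real.cos (2 * Real.pi * k / n)) * t : ℝ)
        = (-(2 * t)) + s * Real.cos (2 * Real.pi * k / n) by rw [hs]; ring,
      Real.exp_add]
    push_cast
    ring
  rw [Finset.sum_congr rfl hLHS, ← Finset.mul_sum, show (1/(n:ℂ)) * (((Real.exp (-(2*t)) : ℝ):ℂ)
      * ∑ k ∈ Finset.range n, ((Real.exp (s * Real.cos (2 * Real.pi * k / n)) : ℂ)
        * Complex.exp (2 * Real.pi * Complex.I * (k:ℂ) * (x:ℂ) / (n:ℂ))))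
    = ((Real.exp (-(2*t)) : ℝ):ℂ) * ((1/(n:ℂ))
      * ∑ k ∈ Finset.range n, ((Real.exp (s * Real.cos (2 * Real.pi * k / n)) : ℂ)
        * Complex.exp (2 * Real.pi * Complex.I * (k:ℂ) * (x:ℂ) / (n:ℂ)))) from by ring]
  congr 1
  rw [← H.tsum_eq, ← h3, h4, h5]
end

section
/- Let d ≥ 1 and let N = (n_1,…,n_d) be a d-tuple of positive integers. For every complex s with Re(s²) > 0, ∑_{Λ_K ≠ 0} 2s/(s² + Λ_K) = V(N) · 2s ∫_0^∞ e^{−s²t} e^{−2dt} I_0(2t)^d dt + 2s ∫_0^∞ e^{−s²t} [θ_N(t) − V(N) e^{−2dt} I_0(2t)^d − 1] dt, where the sum runs over the nonzero eigenvalues Λ_K and both integrals converge absolutely. -/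
open MeasureTheory Real Filter

/-- Eigenvalues of the combinatorial Laplacian on the discrete torus determined by `N`. -/
noncomputable def Lam (d : ℕ) (N : Fin d → ℕ) (K : (j : Fin d) → Fin (N j)) : ℝ :=
  2 * d - ∑ j, 2 * Real.cos (2 * Real.pi * (K j : ℝ) / (N j : ℝ))

/-- The theta function (heat trace) of the discrete torus determined by `N`. -/
noncomputable def discTheta (d : ℕ) (N : Fin d → ℕ) (t : ℝ) : ℝ :=
  ∑ K : ((j : Fin d) → Fin (N j)), Real.exp (-(Lam d N K) * t)

lemma continuous_besselI (x : ℤ) : Continuous (besselI x) := by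
  unfold besselI
  apply Continuous.mul continuous_const
  exact intervalIntegral.continuous_parametric_intervalIntegral_of_continuous' (by fun_prop) 0 Real.pi
lemma abs_besselI_zero_le {s : ℝ} (hs : 0 ≤ s) : |besselI 0 s| ≤ Real.exp s := by
  unfold besselI
  simp only [Int.cast_zero, zero_mul, Real.cos_zero, mul_one]
  rw [abs_mul, abs_of_pos (by positivity : (0:ℝ) < 1 / Real.pi)]
  have h2 : ‖∫ θ in (0:ℝ)..Real.pi, Real.exp (s * Real.cos θ)‖
      ≤ Real.exp s * |Real.pi - 0| := by
    apply intervalIntegral.norm_integral_le_of_norm_le_const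
    intro θ _
    rw [Real.norm_eq_abs, abs_of_pos (Real.exp_pos _)]
    exact Real.exp_le_exp.2 (by nlinarith [Real.cos_le_one θ])
  rw [Real.norm_eq_abs] at h2
  calc 1 / Real.pi * |∫ θ in (0:ℝ)..Real.pi, Real.exp (s * Real.cos θ)|
      ≤ 1 / Real.pi * (Real.exp s * |Real.pi - 0|) := by
        exact mul_le_mul_of_nonneg_left h2 (by positivity)
    _ = Real.exp s := by
        rw [sub_zero, abs_of_pos Real.pi_pos]; field_simp
lemma cexp_norm (c : ℂ) (t : ℝ) : ‖Complex.exp (-c * t)‖ = Real.exp (-c.re * t) := by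
  rw [Complex.norm_exp]
  congr 1
  simp [Complex.mul_re]
lemma integrableOn_cexp_neg {c : ℂ} (hc : 0 < c.re) :
    IntegrableOn (fun t : ℝ => Complex.exp (-c * t)) (Set.Ioi 0) := by
  apply Integrable.mono' ((exp_neg_integrableOn_Ioi 0 hc))
  · exact (Complex.continuous_exp.comp (by fun_prop)).aestronglyMeasurable
  · filter_upwards with t
    rw [cexp_norm]
lemma integral_cexp_neg {c : ℂ} (hc : 0 < c.re) :
    ∫ t in Set.Ioi (0:ℝ), Complex.exp (-c * t) = 1 / c := by
  have hc0 : c ≠ 0 := fun h => by simp [h] at hc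
  have hderiv : ∀ t ∈ Set.Ici (0:ℝ),
      HasDerivAt (fun t : ℝ => -Complex.exp (-c * t) / c) (Complex.exp (-c * t)) t := by
    intro t _
    have h1 : HasDerivAt (fun t : ℝ => -c * (t:ℂ)) (-c) t := by
      simpa using (Complex.ofRealCLM.hasDerivAt (x := t)).const_mul (-c)
    have := ((h1.cexp).neg).div_const c
    have e : -(Complex.exp (-c * ↑t) * -c) / c = Complex.exp (-c * ↑t) := by
      rw [div_eq_iff hc0]; ring
    rw [e] at this
    exact this
  have htend : Tendsto (fun t : ℝ => -Complex.exp (-c * t) / c) atTop (nhds 0) := by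
    rw [tendsto_zero_iff_norm_tendsto_zero]
    have : (fun t : ℝ => ‖-Complex.exp (-c * t) / c‖)
        = fun t : ℝ => Real.exp (-c.re * t) / ‖c‖ := by
      funext t; rw [norm_div, norm_neg, cexp_norm]
    rw [this]
    have h0 : Tendsto (fun t : ℝ => Real.exp (-c.re * t)) atTop (nhds 0) :=
      Real.tendsto_exp_atBot.comp (tendsto_id.const_mul_atTop_of_neg (by linarith))
    simpa using h0.div_const ‖c‖
  have := MeasureTheory.integral_Ioi_of_hasDerivAt_of_tendsto' hderiv
    (integrableOn_cexp_neg hc) htend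
  rw [this]
  rw [Complex.ofReal_zero, mul_zero, Complex.exp_zero, zero_sub, neg_div, neg_neg, one_div]
lemma lam_nonneg (d : ℕ) (N : Fin d → ℕ) (K : (j : Fin d) → Fin (N j)) : 0 ≤ Lam d N K := by
  unfold Lam
  have h : ∑ j, 2 * Real.cos (2 * Real.pi * (K j : ℝ) / (N j : ℝ)) ≤ ∑ _j : Fin d, (2:ℝ) := by
    apply Finset.sum_le_sum
    intro j _
    nlinarith [Real.cos_le_one (2 * Real.pi * (K j : ℝ) / (N j : ℝ))]
  simp only [Finset.sum_const, Finset.card_univ, Fintype.card_fin, smul_eq_mul, nsmul_eq_mul] at h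
  linarith
lemma lam_zero (d : ℕ) (N : Fin d → ℕ) (hN : ∀ j, 0 < N j) :
    Lam d N (fun j => ⟨0, hN j⟩) = 0 := by
  unfold Lam
  simp [nsmul_eq_mul]
  ring
lemma lam_filter (d : ℕ) (N : Fin d → ℕ) (hN : ∀ j, 0 < N j) :
    Finset.univ.filter (fun K : (j : Fin d) → Fin (N j) => Lam d N K = 0)
      = {fun j => ⟨0, hN j⟩} := by
  ext K
  simp only [Finset.mem_filter, Finset.mem_univ, true_and, Finset.mem_singleton]
  constructor
  · intro h
    have hsum : ∑ _j : Fin d, (2:ℝ)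
        = ∑ j, 2 * Real.cos (2 * Real.pi * (K j : ℝ) / (N j : ℝ)) := by
      unfold Lam at h
      simp only [Finset.sum_const, Finset.card_univ, Fintype.card_fin, smul_eq_mul, nsmul_eq_mul]
      linarith
    have hle : ∀ j ∈ Finset.univ,
        2 * Real.cos (2 * Real.pi * (K j : ℝ) / (N j : ℝ)) ≤ (2:ℝ) := by
      intro j _
      nlinarith [Real.cos_le_one (2 * Real.pi * (K j : ℝ) / (N j : ℝ))]
    have heach := (Finset.sum_eq_sum_iff_of_le hle).1 hsum.symm
    funext j
    have hj := heach j (Finset.mem_univ j)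
    have hcos : Real.cos (2 * Real.pi * (K j : ℝ) / (N j : ℝ)) = 1 := by linarith
    have hn : (0:ℝ) < (N j : ℝ) := by exact_mod_cast hN j
    have hklt : ((K j : ℕ) : ℝ) < (N j : ℝ) := by exact_mod_cast (K j).2
    have hk0 : (0:ℝ) ≤ ((K j : ℕ) : ℝ) := Nat.cast_nonneg _
    have hx1 : -(2 * Real.pi) < 2 * Real.pi * (K j : ℝ) / (N j : ℝ) := by
      have : (0:ℝ) ≤ 2 * Real.pi * (K j : ℝ) / (N j : ℝ) := by positivity
      nlinarith [Real.pi_pos]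
    have hx2 : 2 * Real.pi * (K j : ℝ) / (N j : ℝ) < 2 * Real.pi := by
      rw [div_lt_iff₀ hn]
      nlinarith [Real.pi_pos]
    have hzero := (Real.cos_eq_one_iff_of_lt_of_lt hx1 hx2).1 hcos
    have : ((K j : ℕ) : ℝ) = 0 := by
      rcases div_eq_zero_iff.1 hzero with h | h
      · rcases mul_eq_zero.1 h with h' | h'
        · exact absurd h' (ne_of_gt (by positivity))
        · exact h'
      · linarith
    exact Fin.ext (by exact_mod_cast this)
  · rintro rfl
    exact lam_zero d N hN
lemma theta_sub_one (d : ℕ) (N : Fin d → ℕ) (hN : ∀ j, 0 < N j) (t : ℝ) :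
    discTheta d N t - 1
      = ∑ K ∈ Finset.univ.filter (fun K : (j : Fin d) → Fin (N j) => Lam d N K ≠ 0),
          Real.exp (-(Lam d N K) * t) := by
  unfold discTheta
  rw [← Finset.sum_filter_add_sum_filter_not Finset.univ
    (fun K : (j : Fin d) → Fin (N j) => Lam d N K = 0), lam_filter d N hN]
  rw [Finset.sum_singleton, lam_zero d N hN]
  simp
lemma theta_nonneg (d : ℕ) (N : Fin d → ℕ) (t : ℝ) : 0 ≤ discTheta d N t :=
  Finset.sum_nonneg fun _ _ => (Real.exp_pos _).le
lemma theta_le (d : ℕ) (N : Fin d → ℕ) {t : ℝ} (ht : 0 ≤ t) :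
    discTheta d N t ≤ ∏ j, (N j : ℝ) := by
  unfold discTheta
  have : ∀ K : (j : Fin d) → Fin (N j), K ∈ Finset.univ →
      Real.exp (-(Lam d N K) * t) ≤ 1 := by
    intro K _
    rw [Real.exp_le_one_iff]
    have := lam_nonneg d N K
    nlinarith
  calc (∑ K : (j : Fin d) → Fin (N j), Real.exp (-(Lam d N K) * t))
      ≤ ∑ _K : (j : Fin d) → Fin (N j), (1:ℝ) := Finset.sum_le_sum this
    _ = ∏ j, (N j : ℝ) := by
        simp [Finset.sum_const, Finset.card_univ, Fintype.card_pi]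
lemma continuous_theta (d : ℕ) (N : Fin d → ℕ) : Continuous (discTheta d N) := by
  unfold discTheta
  exact continuous_finset_sum _ fun K _ => by fun_prop

/-- The Gauss transform identity for the heat trace of the discrete torus. -/
theorem gauss_transform_discrete_torus (d : ℕ) (hd : 1 ≤ d) (N : Fin d → ℕ)
    (hN : ∀ j, 0 < N j) (s : ℂ) (hs : 0 < (s ^ 2).re) :
    IntegrableOn (fun t : ℝ =>
        Complex.exp (-s ^ 2 * (t : ℂ)) * ((Real.exp (-(2 * d * t)) : ℝ) : ℂ) *
          ((besselI 0 (2 * t) : ℝ) : ℂ) ^ d) (Set.Ioi (0:ℝ)) ∧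
    IntegrableOn (fun t : ℝ =>
        Complex.exp (-s ^ 2 * (t : ℂ)) *
          (((discTheta d N t : ℝ) : ℂ) - ((∏ j, (N j : ℝ)) : ℝ) *
            ((Real.exp (-(2 * d * t)) : ℝ) : ℂ) * ((besselI 0 (2 * t) : ℝ) : ℂ) ^ d - 1))
      (Set.Ioi (0:ℝ)) ∧
    ∑ K ∈ Finset.univ.filter (fun K : (j : Fin d) → Fin (N j) => Lam d N K ≠ 0),
        2 * s / (s ^ 2 + ((Lam d N K : ℝ) : ℂ))
      = ((∏ j, (N j : ℝ) : ℝ) : ℂ) * (2 * s) *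
          (∫ t in Set.Ioi (0:ℝ),
            Complex.exp (-s ^ 2 * (t : ℂ)) * ((Real.exp (-(2 * d * t)) : ℝ) : ℂ) *
              ((besselI 0 (2 * t) : ℝ) : ℂ) ^ d) +
        2 * s *
          (∫ t in Set.Ioi (0:ℝ),
            Complex.exp (-s ^ 2 * (t : ℂ)) *
              (((discTheta d N t : ℝ) : ℂ) - ((∏ j, (N j : ℝ)) : ℝ) *
                ((Real.exp (-(2 * d * t)) : ℝ) : ℂ) * ((besselI 0 (2 * t) : ℝ) : ℂ) ^ d - 1)) := by
  set V : ℝ := ∏ j, (N j : ℝ) with hV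
  have hV0 : 0 ≤ V := Finset.prod_nonneg fun j _ => Nat.cast_nonneg _
  set f₁ : ℝ → ℂ := fun t =>
    Complex.exp (-s ^ 2 * (t : ℂ)) * ((Real.exp (-(2 * d * t)) : ℝ) : ℂ) *
      ((besselI 0 (2 * t) : ℝ) : ℂ) ^ d with hf₁
  set f₂ : ℝ → ℂ := fun t =>
    Complex.exp (-s ^ 2 * (t : ℂ)) *
      (((discTheta d N t : ℝ) : ℂ) - ((V : ℝ) : ℂ) *
        ((Real.exp (-(2 * d * t)) : ℝ) : ℂ) * ((besselI 0 (2 * t) : ℝ) : ℂ) ^ d - 1) with hf₂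
  have hcontB : Continuous fun t : ℝ => besselI 0 (2 * t) :=
    (continuous_besselI 0).comp (by fun_prop)
  have hnormexp : ∀ t : ℝ, ‖Complex.exp (-s ^ 2 * (t : ℂ))‖ = Real.exp (-(s ^ 2).re * t) :=
    fun t => cexp_norm (s ^ 2) t
  -- bound on the Bessel product
  have hEB : ∀ t : ℝ, 0 ≤ t → Real.exp (-(2 * d * t)) * |besselI 0 (2 * t)| ^ d ≤ 1 := by
    intro t ht
    have hb : |besselI 0 (2 * t)| ≤ Real.exp (2 * t) := abs_besselI_zero_le (by linarith)
    have hbp : |besselI 0 (2 * t)| ^ d ≤ Real.exp (2 * t) ^ d :=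
      pow_le_pow_left₀ (abs_nonneg _) hb d
    have hpow : Real.exp (2 * t) ^ d = Real.exp (d * (2 * t)) := (Real.exp_nat_mul _ d).symm
    calc Real.exp (-(2 * d * t)) * |besselI 0 (2 * t)| ^ d
        ≤ Real.exp (-(2 * d * t)) * Real.exp (d * (2 * t)) := by
          rw [← hpow]; exact mul_le_mul_of_nonneg_left hbp (Real.exp_pos _).le
      _ = 1 := by rw [← Real.exp_add]; ring_nf; exact Real.exp_zero
  -- integrability of f₁
  have int1 : IntegrableOn f₁ (Set.Ioi (0:ℝ)) := by
    apply Integrable.mono' (exp_neg_integrableOn_Ioi 0 hs)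
    · apply Continuous.aestronglyMeasurable
      apply Continuous.mul
      · exact (Complex.continuous_exp.comp (by fun_prop)).mul (by fun_prop)
      · exact (Complex.continuous_ofReal.comp hcontB).pow d
    · filter_upwards [ae_restrict_mem measurableSet_Ioi] with t ht
      have ht' : (0:ℝ) ≤ t := le_of_lt ht
      rw [hf₁]
      simp only [norm_mul, norm_pow, Complex.norm_real, Real.norm_eq_abs,
        abs_of_pos (Real.exp_pos _), hnormexp]
      calc Real.exp (-(s ^ 2).re * t) * Real.exp (-(2 * d * t)) * |besselI 0 (2 * t)| ^ d
          = Real.exp (-(s ^ 2).re * t) * (Real.exp (-(2 * d * t)) * |besselI 0 (2 * t)| ^ d) := by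
            ring
        _ ≤ Real.exp (-(s ^ 2).re * t) * 1 :=
            mul_le_mul_of_nonneg_left (hEB t ht') (Real.exp_pos _).le
        _ = Real.exp (-(s ^ 2).re * t) := mul_one _
  -- integrability of f₂
  have int2 : IntegrableOn f₂ (Set.Ioi (0:ℝ)) := by
    apply Integrable.mono'
      ((exp_neg_integrableOn_Ioi 0 hs).const_mul (2 * V + 1))
    · apply Continuous.aestronglyMeasurable
      apply Continuous.mul (Complex.continuous_exp.comp (by fun_prop))
      apply Continuous.sub
      apply Continuous.sub
      · exact Complex.continuous_ofReal.comp (continuous_theta d N)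
      · exact (continuous_const.mul (by fun_prop)).mul
          ((Complex.continuous_ofReal.comp hcontB).pow d)
      · exact continuous_const
    · filter_upwards [ae_restrict_mem measurableSet_Ioi] with t ht
      have ht' : (0:ℝ) ≤ t := le_of_lt ht
      rw [hf₂]
      rw [norm_mul, hnormexp]
      have hb1 : ‖(((discTheta d N t : ℝ) : ℂ) - ((V : ℝ) : ℂ) *
          ((Real.exp (-(2 * d * t)) : ℝ) : ℂ) * ((besselI 0 (2 * t) : ℝ) : ℂ) ^ d - 1)‖
          ≤ 2 * V + 1 := by
        have h1 : ‖((discTheta d N t : ℝ) : ℂ)‖ ≤ V := by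
          rw [Complex.norm_real, Real.norm_eq_abs, abs_of_nonneg (theta_nonneg d N t)]
          exact theta_le d N ht'
        have h2 : ‖((V : ℝ) : ℂ) * ((Real.exp (-(2 * d * t)) : ℝ) : ℂ) *
            ((besselI 0 (2 * t) : ℝ) : ℂ) ^ d‖ ≤ V := by
          rw [norm_mul, norm_mul, norm_pow]
          simp only [Complex.norm_real, Real.norm_eq_abs, abs_of_nonneg hV0,
            abs_of_pos (Real.exp_pos _)]
          calc V * Real.exp (-(2 * d * t)) * |besselI 0 (2 * t)| ^ d
              = V * (Real.exp (-(2 * d * t)) * |besselI 0 (2 * t)| ^ d) := by ring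
            _ ≤ V * 1 := mul_le_mul_of_nonneg_left (hEB t ht') hV0
            _ = V := mul_one _
        calc ‖(((discTheta d N t : ℝ) : ℂ) - ((V : ℝ) : ℂ) *
            ((Real.exp (-(2 * d * t)) : ℝ) : ℂ) * ((besselI 0 (2 * t) : ℝ) : ℂ) ^ d - 1)‖
            ≤ ‖(((discTheta d N t : ℝ) : ℂ) - ((V : ℝ) : ℂ) *
              ((Real.exp (-(2 * d * t)) : ℝ) : ℂ) * ((besselI 0 (2 * t) : ℝ) : ℂ) ^ d)‖ + ‖(1:ℂ)‖ :=
              norm_sub_le _ _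
          _ ≤ ‖((discTheta d N t : ℝ) : ℂ)‖ + ‖((V : ℝ) : ℂ) *
              ((Real.exp (-(2 * d * t)) : ℝ) : ℂ) * ((besselI 0 (2 * t) : ℝ) : ℂ) ^ d‖ + ‖(1:ℂ)‖ := by
              gcongr; exact norm_sub_le _ _
          _ ≤ V + V + 1 := by rw [norm_one]; gcongr
          _ = 2 * V + 1 := by ring
      calc Real.exp (-(s ^ 2).re * t) * ‖(((discTheta d N t : ℝ) : ℂ) - ((V : ℝ) : ℂ) *
            ((Real.exp (-(2 * d * t)) : ℝ) : ℂ) * ((besselI 0 (2 * t) : ℝ) : ℂ) ^ d - 1)‖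
          ≤ Real.exp (-(s ^ 2).re * t) * (2 * V + 1) :=
            mul_le_mul_of_nonneg_left hb1 (Real.exp_pos _).le
        _ = (2 * V + 1) * Real.exp (-(s ^ 2).re * t) := by ring
  refine ⟨int1, int2, ?_⟩
  -- per-eigenvalue facts
  have hre : ∀ K : (j : Fin d) → Fin (N j),
      0 < (s ^ 2 + ((Lam d N K : ℝ) : ℂ)).re := by
    intro K
    rw [Complex.add_re, Complex.ofReal_re]
    have := lam_nonneg d N K
    linarith
  have hmerge : ∀ (K : (j : Fin d) → Fin (N j)) (t : ℝ),
      Complex.exp (-s ^ 2 * (t : ℂ)) * ((Real.exp (-(Lam d N K) * t) : ℝ) : ℂ)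
        = Complex.exp (-(s ^ 2 + ((Lam d N K : ℝ) : ℂ)) * t) := by
    intro K t
    rw [Complex.ofReal_exp, ← Complex.exp_add]
    congr 1
    push_cast
    ring
  -- pointwise splitting
  have hsplit : ∀ t : ℝ, ((V : ℝ) : ℂ) * f₁ t + f₂ t
      = Complex.exp (-s ^ 2 * (t : ℂ)) * (((discTheta d N t : ℝ) : ℂ) - 1) := by
    intro t
    rw [hf₁, hf₂]
    ring
  -- the combined integrand as a finite sum
  have hsum : ∀ t : ℝ, Complex.exp (-s ^ 2 * (t : ℂ)) * (((discTheta d N t : ℝ) : ℂ) - 1)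
      = ∑ K ∈ Finset.univ.filter (fun K : (j : Fin d) → Fin (N j) => Lam d N K ≠ 0),
          Complex.exp (-(s ^ 2 + ((Lam d N K : ℝ) : ℂ)) * t) := by
    intro t
    have h1 : (((discTheta d N t : ℝ) : ℂ) - 1) = ((discTheta d N t - 1 : ℝ) : ℂ) := by
      push_cast; ring
    rw [h1, theta_sub_one d N hN t, Complex.ofReal_sum, Finset.mul_sum]
    exact Finset.sum_congr rfl fun K _ => hmerge K t
  -- compute the right-hand side
  have step1 : ((V : ℝ) : ℂ) * (2 * s) * (∫ t in Set.Ioi (0:ℝ), f₁ t)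
        + 2 * s * (∫ t in Set.Ioi (0:ℝ), f₂ t)
      = 2 * s * ∫ t in Set.Ioi (0:ℝ),
          (((V : ℝ) : ℂ) * f₁ t + f₂ t) := by
    rw [integral_add (int1.const_mul _) int2, MeasureTheory.integral_const_mul]
    ring
  rw [step1]
  have step2 : (∫ t in Set.Ioi (0:ℝ), (((V : ℝ) : ℂ) * f₁ t + f₂ t))
      = ∑ K ∈ Finset.univ.filter (fun K : (j : Fin d) → Fin (N j) => Lam d N K ≠ 0),
          (1 / (s ^ 2 + ((Lam d N K : ℝ) : ℂ))) := by
    rw [integral_congr_ae (Filter.Eventually.of_forall fun t => by rw [hsplit t, hsum t])]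
    rw [integral_finset_sum _ fun K _ => (integrableOn_cexp_neg (hre K))]
    exact Finset.sum_congr rfl fun K _ => integral_cexp_neg (hre K)
  rw [step2, Finset.mul_sum]
  exact Finset.sum_congr rfl fun K _ => by rw [mul_one_div]
end

section
/- For every real ε with 0 < ε < π/2 and every real t > 0, one has 0 ≤ e^{−t} I_0(t) ≤ C · t^{−1/2}, where C = 1/√((2 − ε²/6)π) + ((π − ε)/π) · 1/√((1 − ε²/12) ε² e). -/
open MeasureTheory Real Filter

lemma sub_cube_le_sin (x : ℝ) (hx : 0 ≤ x) : x - x ^ 3 / 6 ≤ Real.sin x := by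
  have key : MonotoneOn (fun x : ℝ => Real.sin x - (x - x ^ 3 / 6)) (Set.Ici 0) := by
    have hd : ∀ y : ℝ, HasDerivAt (fun x : ℝ => Real.sin x - (x - x ^ 3 / 6))
        (Real.cos y - (1 - 3 * y ^ 2 / 6)) y := by
      intro y
      have h2 : HasDerivAt (fun x : ℝ => x - x ^ 3 / 6) (1 - 3 * y ^ 2 / 6) y := by
        have := ((hasDerivAt_pow 3 y).div_const 6)
        exact ((hasDerivAt_id' y).sub this).congr_deriv (by norm_num)
      exact (Real.hasDerivAt_sin y).sub h2
    apply monotoneOn_of_deriv_nonneg (convex_Ici 0)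
    · exact (Real.continuous_sin.sub (by continuity)).continuousOn
    · intro y hy
      exact (hd y).differentiableAt.differentiableWithinAt
    · intro y hy
      rw [(hd y).deriv]
      have := Real.one_sub_sq_div_two_le_cos (x := y)
      nlinarith
  have := key (Set.self_mem_Ici) hx hx
  simpa using this

lemma cos_le_quartic (x : ℝ) (hx : 0 ≤ x) : Real.cos x ≤ 1 - x ^ 2 / 2 + x ^ 4 / 24 := by
  have key : MonotoneOn (fun x : ℝ => (1 - x ^ 2 / 2 + x ^ 4 / 24) - Real.cos x) (Set.Ici 0) := by
    have hd : ∀ y : ℝ, HasDerivAt (fun x : ℝ => (1 - x ^ 2 / 2 + x ^ 4 / 24) - Real.cos x)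
        ((0 - 2 * y / 2 + 4 * y ^ 3 / 24) - (-Real.sin y)) y := by
      intro y
      have h2 : HasDerivAt (fun x : ℝ => 1 - x ^ 2 / 2 + x ^ 4 / 24)
          (0 - 2 * y / 2 + 4 * y ^ 3 / 24) y := by
        have ha := ((hasDerivAt_pow 2 y).div_const 2)
        have hb := ((hasDerivAt_pow 4 y).div_const 24)
        exact (((hasDerivAt_const y (1:ℝ)).sub ha).add hb).congr_deriv (by norm_num)
      exact h2.sub (Real.hasDerivAt_cos y)
    apply monotoneOn_of_deriv_nonneg (convex_Ici 0)
    · exact ((by continuity : Continuous fun x : ℝ => 1 - x ^ 2 / 2 + x ^ 4 / 24).sub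
        Real.continuous_cos).continuousOn
    · intro y hy
      exact (hd y).differentiableAt.differentiableWithinAt
    · intro y hy
      rw [(hd y).deriv]
      have hy0 : 0 ≤ y := le_of_lt (by simpa using hy)
      have := sub_cube_le_sin y hy0
      nlinarith
  have := key (Set.self_mem_Ici) hx hx
  simp only [Real.cos_zero] at this
  nlinarith [this]

set_option maxHeartbeats 1000000 in
/-- Uniform bound `0 ≤ e^{-t} I_0(t) ≤ C t^{-1/2}` with the explicit constant `C`. -/
theorem besselI_zero_bound (ε : ℝ) (hε0 : 0 < ε) (hε : ε < Real.pi / 2) (t : ℝ) (ht : 0 < t) :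
    0 ≤ Real.exp (-t) * besselI 0 t ∧
    Real.exp (-t) * besselI 0 t ≤
      (1 / Real.sqrt ((2 - ε ^ 2 / 6) * Real.pi) +
        ((Real.pi - ε) / Real.pi) *
          (1 / Real.sqrt ((1 - ε ^ 2 / 12) * ε ^ 2 * Real.exp 1))) * t ^ (-(1:ℝ) / 2) := by
  have hπ : (0:ℝ) < π := Real.pi_pos
  have hεπ : ε < π := hε.trans (by linarith)
  have hε2 : ε ^ 2 < 4 := by nlinarith [Real.pi_lt_d2]
  set a : ℝ := (12 - ε ^ 2) / 24 with ha_def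
  set b : ℝ := (1 - ε ^ 2 / 12) * ε ^ 2 / 2 with hb_def
  have ha : 0 < a := by rw [ha_def]; nlinarith
  have hb : 0 < b := by rw [hb_def]; nlinarith
  have hat : 0 < a * t := mul_pos ha ht
  -- rewrite
  have hexp_eq : ∀ θ : ℝ, Real.exp (t * Real.cos θ - t)
      = Real.exp (-t) * Real.exp (t * Real.cos θ) := by
    intro θ; rw [← Real.exp_add]; ring_nf
  have hrw : Real.exp (-t) * besselI 0 t
      = (1 / π) * ∫ θ in (0:ℝ)..π, Real.exp (t * Real.cos θ - t) := by
    unfold besselI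
    simp only [Int.cast_zero, zero_mul, Real.cos_zero, mul_one, hexp_eq]
    rw [intervalIntegral.integral_const_mul]
    ring
  have hcont : Continuous fun θ : ℝ => Real.exp (t * Real.cos θ - t) :=
    Real.continuous_exp.comp ((continuous_const.mul Real.continuous_cos).sub continuous_const)
  have hcontg : Continuous fun θ : ℝ => Real.exp (-(a * t) * θ ^ 2) :=
    Real.continuous_exp.comp (continuous_const.mul (continuous_pow 2))
  constructor
  · rw [hrw]
    have hJ : 0 ≤ ∫ θ in (0:ℝ)..π, Real.exp (t * Real.cos θ - t) :=
      intervalIntegral.integral_nonneg hπ.le fun u _ => (Real.exp_nonneg _)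
    positivity
  -- split the integral
  have hsplit : (∫ θ in (0:ℝ)..π, Real.exp (t * Real.cos θ - t))
      = (∫ θ in (0:ℝ)..ε, Real.exp (t * Real.cos θ - t))
        + ∫ θ in ε..π, Real.exp (t * Real.cos θ - t) :=
    (intervalIntegral.integral_add_adjacent_intervals
      (hcont.intervalIntegrable _ _) (hcont.intervalIntegrable _ _)).symm
  -- first piece
  have hA1 : (∫ θ in (0:ℝ)..ε, Real.exp (t * Real.cos θ - t))
      ≤ ∫ θ in (0:ℝ)..ε, Real.exp (-(a * t) * θ ^ 2) := by
    apply intervalIntegral.integral_mono_on hε0.le (hcont.intervalIntegrable _ _)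
      (hcontg.intervalIntegrable _ _)
    intro θ hθ
    obtain ⟨h0θ, hθε⟩ := hθ
    apply Real.exp_le_exp.2
    have hc := cos_le_quartic θ h0θ
    have hθ2 : θ ^ 2 ≤ ε ^ 2 := by nlinarith
    have h4 : θ ^ 4 ≤ ε ^ 2 * θ ^ 2 := by
      nlinarith [mul_le_mul_of_nonneg_right hθ2 (sq_nonneg θ)]
    have h5 : Real.cos θ - 1 ≤ -(a * θ ^ 2) := by rw [ha_def]; nlinarith
    nlinarith [mul_le_mul_of_nonneg_left h5 ht.le]
  have hA2 : (∫ θ in (0:ℝ)..ε, Real.exp (-(a * t) * θ ^ 2))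
      ≤ Real.sqrt (π / (a * t)) / 2 := by
    rw [← integral_gaussian_Ioi (a * t), intervalIntegral.integral_of_le hε0.le]
    apply MeasureTheory.setIntegral_mono_set (integrable_exp_neg_mul_sq hat).integrableOn
      (Filter.Eventually.of_forall fun x => Real.exp_nonneg _)
      (HasSubset.Subset.eventuallyLE Set.Ioc_subset_Ioi_self)
  -- second piece
  have hB : (∫ θ in ε..π, Real.exp (t * Real.cos θ - t)) ≤ (π - ε) * Real.exp (-(b * t)) := by
    have hconst : (∫ _ in ε..π, Real.exp (-(b * t))) = (π - ε) * Real.exp (-(b * t)) := by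
      rw [intervalIntegral.integral_const, smul_eq_mul]
    rw [← hconst]
    apply intervalIntegral.integral_mono_on hεπ.le (hcont.intervalIntegrable _ _)
      ((continuous_const).intervalIntegrable _ _)
    intro θ hθ
    obtain ⟨hεθ, hθπ⟩ := hθ
    apply Real.exp_le_exp.2
    have hcc : Real.cos θ ≤ Real.cos ε :=
      Real.cos_le_cos_of_nonneg_of_le_pi hε0.le hθπ hεθ
    have hce := cos_le_quartic ε hε0.le
    have h5 : Real.cos θ - 1 ≤ -b := by rw [hb_def]; nlinarith
    nlinarith [mul_le_mul_of_nonneg_left h5 ht.le]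
  -- exp decay bound
  have hexp : Real.exp (-(b * t)) ≤ 1 / Real.sqrt (2 * b * Real.exp 1 * t) := by
    have he : (0:ℝ) < Real.exp 1 := Real.exp_pos 1
    have key : Real.exp 1 * (2 * b * t) ≤ Real.exp (2 * b * t) := by
      have h1 := Real.add_one_le_exp (2 * b * t - 1)
      have h2 : Real.exp (2 * b * t - 1) = Real.exp (2 * b * t) / Real.exp 1 :=
        Real.exp_sub _ _
      rw [h2] at h1
      have h3 : 2 * b * t ≤ Real.exp (2 * b * t) / Real.exp 1 := by linarith
      calc Real.exp 1 * (2 * b * t) ≤ Real.exp 1 * (Real.exp (2 * b * t) / Real.exp 1) :=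
            mul_le_mul_of_nonneg_left h3 he.le
        _ = Real.exp (2 * b * t) := by field_simp
    have h3 : Real.sqrt (2 * b * Real.exp 1 * t) ≤ Real.exp (b * t) := by
      rw [show Real.exp (b * t) = Real.sqrt (Real.exp (b * t) ^ 2) from
        (Real.sqrt_sq (Real.exp_nonneg _)).symm]
      apply Real.sqrt_le_sqrt
      calc 2 * b * Real.exp 1 * t = Real.exp 1 * (2 * b * t) := by ring
        _ ≤ Real.exp (2 * b * t) := key
        _ = Real.exp (b * t) ^ 2 := by rw [pow_two, ← Real.exp_add]; ring_nf
    have hpos : 0 < Real.sqrt (2 * b * Real.exp 1 * t) :=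
      Real.sqrt_pos.2 (by positivity)
    rw [Real.exp_neg, one_div]
    exact inv_anti₀ hpos h3
  -- the sqrt algebra
  have hts : t ^ (-(1:ℝ) / 2) = (Real.sqrt t)⁻¹ := by
    rw [show (-(1:ℝ) / 2) = -(1 / 2) by ring, Real.rpow_neg ht.le, ← Real.sqrt_eq_rpow]
  have hsa : (0:ℝ) < Real.sqrt a := Real.sqrt_pos.2 ha
  have hst : (0:ℝ) < Real.sqrt t := Real.sqrt_pos.2 ht
  have hsπ : (0:ℝ) < Real.sqrt π := Real.sqrt_pos.2 hπ
  have E1 : (1 / π) * (Real.sqrt (π / (a * t)) / 2)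
      = (1 / Real.sqrt ((2 - ε ^ 2 / 6) * π)) * (Real.sqrt t)⁻¹ := by
    have h4aπ : (2 - ε ^ 2 / 6) * π = 2 ^ 2 * (a * π) := by rw [ha_def]; ring
    rw [h4aπ, Real.sqrt_mul (by positivity : (0:ℝ) ≤ (2:ℝ) ^ 2),
      Real.sqrt_sq (by norm_num : (0:ℝ) ≤ 2), Real.sqrt_mul ha.le,
      Real.sqrt_div hπ.le, Real.sqrt_mul ha.le]
    have hππ : π = Real.sqrt π * Real.sqrt π := (Real.mul_self_sqrt hπ.le).symm
    conv_lhs => rw [hππ]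
    field_simp
    rw [Real.sqrt_sq hsπ.le]
  have hce : (0:ℝ) < (1 - ε ^ 2 / 12) * ε ^ 2 * Real.exp 1 := by
    have := Real.exp_pos 1; nlinarith
  have E2 : (1 / π) * ((π - ε) * (1 / Real.sqrt (2 * b * Real.exp 1 * t)))
      = ((π - ε) / π) * (1 / Real.sqrt ((1 - ε ^ 2 / 12) * ε ^ 2 * Real.exp 1))
        * (Real.sqrt t)⁻¹ := by
    have h2be : 2 * b * Real.exp 1 * t = ((1 - ε ^ 2 / 12) * ε ^ 2 * Real.exp 1) * t := by
      rw [hb_def]; ring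
    rw [h2be, Real.sqrt_mul hce.le]
    have hS : (0:ℝ) < Real.sqrt ((1 - ε ^ 2 / 12) * ε ^ 2 * Real.exp 1) :=
      Real.sqrt_pos.2 hce
    field_simp
  rw [hrw, hsplit, hts]
  calc (1 / π) * ((∫ θ in (0:ℝ)..ε, Real.exp (t * Real.cos θ - t))
        + ∫ θ in ε..π, Real.exp (t * Real.cos θ - t))
      ≤ (1 / π) * (Real.sqrt (π / (a * t)) / 2
          + (π - ε) * (1 / Real.sqrt (2 * b * Real.exp 1 * t))) := by
        apply mul_le_mul_of_nonneg_left _ (by positivity)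
        have h1 := hA1.trans hA2
        have h2 : (π - ε) * Real.exp (-(b * t))
            ≤ (π - ε) * (1 / Real.sqrt (2 * b * Real.exp 1 * t)) :=
          mul_le_mul_of_nonneg_left hexp (by linarith)
        linarith
    _ = (1 / Real.sqrt ((2 - ε ^ 2 / 6) * π) +
          ((π - ε) / π) * (1 / Real.sqrt ((1 - ε ^ 2 / 12) * ε ^ 2 * Real.exp 1)))
          * (Real.sqrt t)⁻¹ := by
        rw [mul_add, E1, E2]; ring
end

section
/- For every real x ≥ 1 and every real t > 0, define h_x(t) = √(x² + t²) − t + x·log(t/(x + √(x² + t²))). Then exp(h_x(t)) ≤ (t/(t + x))^{x/2}. -/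
set_option maxHeartbeats 1000000

open Real

private lemma pade_log {u : ℝ} (hu : 1 ≤ u) : 2 * (u - 1) / (u + 1) ≤ Real.log u := by
  have hd : ∀ v ∈ Set.Ici (1:ℝ), HasDerivAt (fun w => Real.log w - (2 - 4 * (w + 1)⁻¹))
      (v⁻¹ - (0 - 4 * (-1 / (v + 1) ^ 2))) v := by
    intro v hv
    have hv1 : (1:ℝ) ≤ v := hv
    have h1 : HasDerivAt Real.log v⁻¹ v := Real.hasDerivAt_log (by linarith)
    have h2 : HasDerivAt (fun w : ℝ => w + 1) 1 v := (hasDerivAt_id v).add_const 1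
    have h3 : HasDerivAt (fun w : ℝ => (w + 1)⁻¹) (-1 / (v + 1) ^ 2) v :=
      h2.inv (by linarith)
    exact h1.sub ((hasDerivAt_const v (2:ℝ)).sub (h3.const_mul 4))
  have hmono : MonotoneOn (fun w => Real.log w - (2 - 4 * (w + 1)⁻¹)) (Set.Ici 1) := by
    apply monotoneOn_of_deriv_nonneg (convex_Ici 1)
    · exact fun v hv => (hd v hv).continuousAt.continuousWithinAt
    · intro v hv
      rw [interior_Ici] at hv
      exact (hd v (Set.mem_Ici.2 (le_of_lt (Set.mem_Ioi.1 hv)))).differentiableAt.differentiableWithinAt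
    · intro v hv
      rw [interior_Ici] at hv
      have h1v : (1:ℝ) < v := hv
      rw [(hd v h1v.le).deriv]
      have hkey : v⁻¹ - (0 - 4 * (-1 / (v + 1) ^ 2)) = (v - 1) ^ 2 / (v * (v + 1) ^ 2) := by
        field_simp
        ring
      rw [hkey]
      positivity
  have h0 : (fun w => Real.log w - (2 - 4 * (w + 1)⁻¹)) 1 ≤
      (fun w => Real.log w - (2 - 4 * (w + 1)⁻¹)) u :=
    hmono (by simp) hu hu
  simp only [Real.log_one] at h0
  have hu1 : u + 1 ≠ 0 := by linarith
  have : 2 * (u - 1) / (u + 1) = 2 - 4 * (u + 1)⁻¹ := by field_simp; ring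
  rw [this]
  norm_num at h0
  linarith

/-- For `x ≥ 1` and `t > 0`, with `h_x(t) = √(x²+t²) - t + x·log(t/(x+√(x²+t²)))`, one has
`exp(h_x(t)) ≤ (t/(t+x))^(x/2)`. -/
theorem exp_h_le (x : ℝ) (hx : 1 ≤ x) (t : ℝ) (ht : 0 < t) :
    Real.exp (Real.sqrt (x ^ 2 + t ^ 2) - t +
        x * Real.log (t / (x + Real.sqrt (x ^ 2 + t ^ 2))))
      ≤ (t / (t + x)) ^ (x / 2) := by
  have hx0 : 0 < x := by linarith
  set s := Real.sqrt (x ^ 2 + t ^ 2) with hs_def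
  set r := Real.sqrt (t * (t + x)) with hr_def
  have hs0 : 0 ≤ s := Real.sqrt_nonneg _
  have hs2 : s ^ 2 = x ^ 2 + t ^ 2 := Real.sq_sqrt (by positivity)
  have hsx : x ≤ s := by nlinarith [hs2, hs0, sq_nonneg (s - x)]
  have hst : t ≤ s := by nlinarith [hs2, hs0, sq_nonneg (s - t)]
  have hspos : 0 < s := lt_of_lt_of_le hx0 hsx
  have hr0 : 0 < r := Real.sqrt_pos.2 (by positivity)
  have hr2 : r ^ 2 = t * (t + x) := Real.sq_sqrt (by positivity)
  have hrxs : r ≤ x + s := by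
    apply le_of_pow_le_pow_left₀ two_ne_zero (by linarith)
    nlinarith [hr2, hs2, mul_nonneg hx0.le (sub_nonneg.2 hst)]
  -- the key polynomial identity and inequality
  have hident : ((x + s) * (2 * s + 2 * t - x)) ^ 2 =
      (r * (x + 2 * s + 2 * t)) ^ 2 +
        (2 * x ^ 4 + 3 * x ^ 3 * t + 4 * x ^ 2 * t ^ 2 + 2 * x ^ 3 * s + 4 * x ^ 2 * t * s) := by
    linear_combination (4 * s ^ 2 + 4 * x * s + 8 * t * s + x ^ 2 + 8 * x * t + 4 * t ^ 2) * hs2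
      - (x + 2 * s + 2 * t) ^ 2 * hr2
  have hRnn : 0 ≤ 2 * x ^ 4 + 3 * x ^ 3 * t + 4 * x ^ 2 * t ^ 2 + 2 * x ^ 3 * s
      + 4 * x ^ 2 * t * s := by positivity
  have hbnn : 0 ≤ (x + s) * (2 * s + 2 * t - x) :=
    mul_nonneg (by linarith) (by linarith)
  have key : r * (x + 2 * s + 2 * t) ≤ (x + s) * (2 * s + 2 * t - x) :=
    le_of_pow_le_pow_left₀ two_ne_zero hbnn (by linarith [hident, hRnn])
  -- basic positivity facts
  have hxs : 0 < x + s := by linarith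
  have hstp : 0 < s + t := by linarith
  have hxsr : 0 < x + s + r := by linarith
  have htx : 0 < t + x := by linarith
  -- step B': x/(s+t) ≤ 2(x+s-r)/(x+s+r)
  have hB' : x / (s + t) ≤ 2 * ((x + s) - r) / ((x + s) + r) := by
    rw [div_le_div_iff₀ hstp hxsr]
    nlinarith [key]
  -- u ≥ 1
  have hu1 : 1 ≤ (x + s) / r := (one_le_div hr0).2 hrxs
  have hpade := pade_log hu1
  have heq : 2 * ((x + s) / r - 1) / ((x + s) / r + 1) = 2 * ((x + s) - r) / ((x + s) + r) := by
    rw [div_sub_one hr0.ne', div_add' _ _ _ hr0.ne', one_mul, mul_div_assoc', div_div_div_eq]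
    rw [div_eq_div_iff (by positivity) (by positivity)]
    ring
  have hlogu : x / (s + t) ≤ Real.log ((x + s) / r) := by
    calc x / (s + t) ≤ 2 * ((x + s) - r) / ((x + s) + r) := hB'
    _ = 2 * ((x + s) / r - 1) / ((x + s) / r + 1) := heq.symm
    _ ≤ Real.log ((x + s) / r) := hpade
  -- main log inequality
  have hA : s - t = x ^ 2 / (s + t) := by
    rw [eq_div_iff hstp.ne']
    nlinarith [hs2]
  have hmain : s - t ≤ x * (Real.log (x + s) - (Real.log t + Real.log (t + x)) / 2) := by
    have h1 : x ^ 2 / (s + t) = x * (x / (s + t)) := by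
      rw [← mul_div_assoc]; ring_nf
    have h2 : x * (x / (s + t)) ≤ x * Real.log ((x + s) / r) :=
      mul_le_mul_of_nonneg_left hlogu hx0.le
    have h3 : Real.log ((x + s) / r) = Real.log (x + s) - Real.log r :=
      Real.log_div hxs.ne' hr0.ne'
    have h4 : Real.log r = Real.log (t * (t + x)) / 2 := Real.log_sqrt (by positivity)
    have h5 : Real.log (t * (t + x)) = Real.log t + Real.log (t + x) :=
      Real.log_mul ht.ne' htx.ne'
    rw [hA, h1]
    rw [h3, h4, h5] at h2
    linarith
  -- conclude
  rw [Real.rpow_def_of_pos (div_pos ht htx), Real.exp_le_exp]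
  rw [Real.log_div ht.ne' hxs.ne', Real.log_div ht.ne' htx.ne']
  nlinarith [hmain]
end

section
/- For every real t > 0 and every integer x ≥ 0, one has √t · e^{−t} · I_x(t) ≤ (t/(t + x))^{x/2} = (1 + x/t)^{−x/2}. -/
open Real

private lemma besselI_reflect (a : ℝ) (x : ℕ) :
    (∫ θ in (0:ℝ)..(2*π), Real.exp (a * Real.cos θ) * Real.cos ((x:ℝ) * θ))
      = 2 * ∫ θ in (0:ℝ)..π, Real.exp (a * Real.cos θ) * Real.cos ((x:ℝ) * θ) := by
  have hc : ∀ u v : ℝ, IntervalIntegrable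
      (fun θ : ℝ => Real.exp (a * Real.cos θ) * Real.cos ((x:ℝ)*θ)) MeasureTheory.volume u v :=
    fun u v => (by fun_prop : Continuous fun θ : ℝ =>
      Real.exp (a * Real.cos θ) * Real.cos ((x:ℝ)*θ)).intervalIntegrable u v
  have key : (∫ θ in π..(2*π), Real.exp (a * Real.cos θ) * Real.cos ((x:ℝ)*θ))
      = ∫ θ in (0:ℝ)..π, Real.exp (a * Real.cos θ) * Real.cos ((x:ℝ)*θ) := by
    have h := intervalIntegral.integral_comp_sub_left (a := 0) (b := π)
      (fun θ => Real.exp (a * Real.cos θ) * Real.cos ((x:ℝ)*θ)) (2*π)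
    rw [show 2*π - π = π by ring, sub_zero] at h
    rw [← h]
    apply intervalIntegral.integral_congr
    intro θ _
    simp only
    rw [Real.cos_two_pi_sub]
    congr 1
    rw [show (x:ℝ) * (2*π - θ) = ((x:ℤ):ℝ) * (2*π) - (x:ℝ)*θ by push_cast; ring,
      Real.cos_int_mul_two_pi_sub]
  rw [← intervalIntegral.integral_add_adjacent_intervals (hc 0 π) (hc π (2*π)), key]
  ring

private lemma gauss_bound {s : ℝ} (hs : 0 < s) :
    (∫ θ in (0:ℝ)..π, Real.exp (s * Real.cos θ))
      ≤ Real.exp s * (π * Real.sqrt (π/(2*s)) / 2) := by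
  have hb : 0 < 2*s/π^2 := by positivity
  have h1 : (∫ θ in (0:ℝ)..π, Real.exp (s * Real.cos θ))
      ≤ ∫ θ in (0:ℝ)..π, Real.exp s * Real.exp (-(2*s/π^2) * θ^2) := by
    apply intervalIntegral.integral_mono_on Real.pi_pos.le
      ((by fun_prop : Continuous fun θ : ℝ => Real.exp (s * Real.cos θ)).intervalIntegrable _ _)
      ((by fun_prop : Continuous fun θ : ℝ =>
        Real.exp s * Real.exp (-(2*s/π^2) * θ^2)).intervalIntegrable _ _)
    intro θ hθ
    rw [← Real.exp_add]
    apply Real.exp_le_exp.2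
    have habs : |θ| ≤ π := by rw [abs_of_nonneg hθ.1]; exact hθ.2
    have h2 := Real.cos_le_one_sub_mul_cos_sq habs
    have h3 := mul_le_mul_of_nonneg_left h2 hs.le
    have h4 : s * (1 - 2/π^2 * θ^2) = s + -(2*s/π^2)*θ^2 := by ring
    linarith [h3, h4.ge]
  have h2 : (∫ θ in (0:ℝ)..π, Real.exp (-(2*s/π^2) * θ^2))
      ≤ Real.sqrt (π/(2*s/π^2))/2 := by
    rw [← integral_gaussian_Ioi]
    rw [intervalIntegral.integral_of_le Real.pi_pos.le]
    apply MeasureTheory.setIntegral_mono_set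
    · exact (integrableOn_Ioi_exp_neg_mul_sq_iff.2 hb)
    · exact Filter.Eventually.of_forall (fun θ => (Real.exp_pos _).le)
    · exact HasSubset.Subset.eventuallyLE Set.Ioc_subset_Ioi_self
  have h3 : Real.sqrt (π/(2*s/π^2)) = π * Real.sqrt (π/(2*s)) := by
    rw [show π/(2*s/π^2) = π^2 * (π/(2*s)) by field_simp,
      Real.sqrt_mul (sq_nonneg π), Real.sqrt_sq Real.pi_pos.le]
  calc (∫ θ in (0:ℝ)..π, Real.exp (s * Real.cos θ))
      ≤ ∫ θ in (0:ℝ)..π, Real.exp s * Real.exp (-(2*s/π^2) * θ^2) := h1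
    _ = Real.exp s * ∫ θ in (0:ℝ)..π, Real.exp (-(2*s/π^2) * θ^2) := by
        rw [intervalIntegral.integral_const_mul]
    _ ≤ Real.exp s * (Real.sqrt (π/(2*s/π^2))/2) := by
        exact mul_le_mul_of_nonneg_left h2 (Real.exp_pos _).le
    _ = Real.exp s * (π * Real.sqrt (π/(2*s)) / 2) := by rw [h3]

private lemma annulus_bound (t : ℝ) (x : ℕ) {r : ℝ} (hr : 1 ≤ r) :
    (∫ θ in (0:ℝ)..(2*π), Real.exp (t * Real.cos θ) * Real.cos ((x:ℝ) * θ))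
      ≤ (r⁻¹)^x * ∫ θ in (0:ℝ)..(2*π), Real.exp ((t/2*(r+r⁻¹)) * Real.cos θ) := by
  have hr0 : 0 < r := lt_of_lt_of_le one_pos hr
  set f : ℂ → ℂ := fun z => Complex.exp ((t/2 : ℂ) * (z + z⁻¹)) * z ^ (-(x:ℤ)-1) with hf
  have hdiff : ∀ z : ℂ, z ≠ 0 → DifferentiableAt ℂ f z := by
    intro z hz
    apply DifferentiableAt.mul
    · exact DifferentiableAt.cexp
        ((differentiableAt_const _).mul (differentiableAt_id.add (differentiableAt_id.inv hz)))
    · exact differentiableAt_zpow.2 (Or.inl hz)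
  have heq : (∮ z in C(0, r), f z) = ∮ z in C(0, 1), f z := by
    apply Complex.circleIntegral_eq_of_differentiable_on_annulus_off_countable one_pos hr
      Set.countable_empty
    · intro z hz
      have hz1 : z ∉ Metric.ball (0:ℂ) 1 := hz.2
      have : z ≠ 0 := by
        intro h; apply hz1; rw [h]; simp [Metric.mem_ball]
      exact (hdiff z this).continuousAt.continuousWithinAt
    · intro z hz
      have hz1 : z ∉ Metric.closedBall (0:ℂ) 1 := hz.1.2
      have : z ≠ 0 := by
        intro h; apply hz1; rw [h]; simp [Metric.mem_closedBall]
      exact hdiff z this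
  -- pointwise identity on the unit circle
  have hfval : ∀ z : ℂ, f z = Complex.exp ((t/2 : ℂ) * (z + z⁻¹)) * z ^ (-(x:ℤ)-1) :=
    fun z => rfl
  have hpt : ∀ θ : ℝ, -Complex.I * (deriv (circleMap 0 1) θ • f (circleMap 0 1 θ))
      = ((Real.exp (t * Real.cos θ) * Real.cos ((x:ℝ)*θ) : ℝ) : ℂ)
        + ((-(Real.exp (t * Real.cos θ) * Real.sin ((x:ℝ)*θ)) : ℝ) : ℂ) * Complex.I := by
    intro θ
    have hcm : circleMap 0 1 θ = Complex.exp (↑θ * Complex.I) := by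
      simp [circleMap]
    rw [deriv_circleMap, hcm, smul_eq_mul, hfval]
    have e2 : (Complex.exp (↑θ * Complex.I))⁻¹ = Complex.exp (-(↑θ * Complex.I)) :=
      (Complex.exp_neg _).symm
    have h1 : Complex.exp (↑θ * Complex.I) = Complex.cos ↑θ + Complex.sin ↑θ * Complex.I :=
      Complex.exp_mul_I ↑θ
    have h2 : Complex.exp (-(↑θ * Complex.I)) = Complex.cos ↑θ - Complex.sin ↑θ * Complex.I := by
      rw [← neg_mul, Complex.exp_mul_I, Complex.cos_neg, Complex.sin_neg]; ring
    have hsum : (t/2 : ℂ) * (Complex.exp (↑θ * Complex.I) + Complex.exp (-(↑θ * Complex.I)))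
        = ((t * Real.cos θ : ℝ) : ℂ) := by
      rw [h1, h2, ← Complex.ofReal_cos]
      push_cast
      ring
    have hz : Complex.exp (↑θ * Complex.I) * Complex.exp (↑θ * Complex.I) ^ (-(x:ℤ)-1)
        = Complex.exp (↑(-((x:ℝ)*θ)) * Complex.I) := by
      rw [← Complex.exp_int_mul, ← Complex.exp_add]
      congr 1
      push_cast
      ring
    have hxval : Complex.exp (↑(-((x:ℝ)*θ)) * Complex.I)
        = ↑(Real.cos ((x:ℝ)*θ)) - ↑(Real.sin ((x:ℝ)*θ)) * Complex.I := by
      rw [Complex.exp_mul_I, ← Complex.ofReal_cos, ← Complex.ofReal_sin,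
        Real.cos_neg, Real.sin_neg]
      push_cast
      ring
    rw [e2, hsum, ← Complex.ofReal_exp]
    calc -Complex.I * (Complex.exp (↑θ*Complex.I) * Complex.I *
            (↑(Real.exp (t*Real.cos θ)) * Complex.exp (↑θ*Complex.I) ^ (-(x:ℤ)-1)))
        = ↑(Real.exp (t*Real.cos θ)) *
            (Complex.exp (↑θ*Complex.I) * Complex.exp (↑θ*Complex.I) ^ (-(x:ℤ)-1)) *
            (-(Complex.I * Complex.I)) := by ring
      _ = ↑(Real.exp (t*Real.cos θ)) * Complex.exp (↑(-((x:ℝ)*θ)) * Complex.I) := by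
          rw [hz, Complex.I_mul_I]; ring
      _ = _ := by rw [hxval]; push_cast; ring
  -- value of the unit-circle integral
  have hO1 : (∮ z in C(0, 1), f z)
      = ∫ θ in (0:ℝ)..2*π, deriv (circleMap 0 1) θ • f (circleMap 0 1 θ) := rfl
  have hOr : (∮ z in C(0, r), f z)
      = ∫ θ in (0:ℝ)..2*π, deriv (circleMap 0 r) θ • f (circleMap 0 r θ) := rfl
  have hA : (-Complex.I * ∮ z in C(0, 1), f z).re
      = ∫ θ in (0:ℝ)..2*π, Real.exp (t*Real.cos θ) * Real.cos ((x:ℝ)*θ) := by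
    have hconst : -Complex.I * (∮ z in C(0, 1), f z)
        = ∫ θ in (0:ℝ)..2*π, -Complex.I * (deriv (circleMap 0 1) θ • f (circleMap 0 1 θ)) := by
      rw [hO1, intervalIntegral.integral_const_mul]
    rw [hconst, intervalIntegral.integral_congr (g := fun θ : ℝ =>
        ((Real.exp (t * Real.cos θ) * Real.cos ((x:ℝ)*θ) : ℝ) : ℂ)
        + ((-(Real.exp (t * Real.cos θ) * Real.sin ((x:ℝ)*θ)) : ℝ) : ℂ) * Complex.I)
        (fun θ _ => hpt θ)]
    have hg1 : IntervalIntegrable (fun θ:ℝ =>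
        ((Real.exp (t*Real.cos θ)*Real.cos ((x:ℝ)*θ) : ℝ):ℂ)) MeasureTheory.volume 0 (2*π) :=
      (by fun_prop : Continuous fun θ:ℝ =>
        ((Real.exp (t*Real.cos θ)*Real.cos ((x:ℝ)*θ) : ℝ):ℂ)).intervalIntegrable _ _
    have hg2 : IntervalIntegrable (fun θ:ℝ =>
        ((-(Real.exp (t*Real.cos θ)*Real.sin ((x:ℝ)*θ)) : ℝ):ℂ) * Complex.I)
        MeasureTheory.volume 0 (2*π) :=
      (by fun_prop : Continuous fun θ:ℝ =>
        ((-(Real.exp (t*Real.cos θ)*Real.sin ((x:ℝ)*θ)) : ℝ):ℂ) * Complex.I).intervalIntegrable _ _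
    rw [intervalIntegral.integral_add hg1 hg2, intervalIntegral.integral_mul_const,
      intervalIntegral.integral_ofReal, intervalIntegral.integral_ofReal]
    simp
  -- norm bound on the circle of radius r
  have hnorm_pt : ∀ θ ∈ Set.uIcc (0:ℝ) (2*π),
      ‖deriv (circleMap 0 r) θ • f (circleMap 0 r θ)‖
        = (r⁻¹)^x * Real.exp ((t/2*(r+r⁻¹)) * Real.cos θ) := by
    intro θ _
    have hw : circleMap 0 r θ = ↑r * Complex.exp (↑θ * Complex.I) := circleMap_zero r θ
    have hw0 : circleMap 0 r θ ≠ 0 := circleMap_ne_center hr0.ne'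
    have hwinv : (circleMap 0 r θ)⁻¹ = ↑r⁻¹ * Complex.exp (↑(-θ) * Complex.I) := by
      rw [hw, mul_inv, ← Complex.exp_neg]
      push_cast
      ring
    have hre : (t/2 : ℂ) * (circleMap 0 r θ + (circleMap 0 r θ)⁻¹)
        = ↑(t/2*(r+r⁻¹) * Real.cos θ) + ↑(t/2*(r-r⁻¹) * Real.sin θ) * Complex.I := by
      rw [hwinv, hw, Complex.exp_mul_I, Complex.exp_mul_I, ← Complex.ofReal_cos,
        ← Complex.ofReal_sin, ← Complex.ofReal_cos, ← Complex.ofReal_sin,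
        Real.cos_neg, Real.sin_neg]
      push_cast
      ring
    have hnw : ‖circleMap 0 r θ‖ = r := by
      rw [norm_circleMap_zero, abs_of_pos hr0]
    rw [deriv_circleMap, smul_eq_mul, hfval]
    rw [norm_mul, norm_mul, norm_mul, Complex.norm_I, mul_one, hnw]
    rw [Complex.norm_exp, hre]
    rw [norm_zpow, hnw]
    have hzp : r * (Real.exp (t/2*(r+r⁻¹) * Real.cos θ) * r ^ (-(x:ℤ)-1))
        = (r⁻¹)^x * Real.exp ((t/2*(r+r⁻¹)) * Real.cos θ) := by
      rw [show (-(x:ℤ)-1) = -((x:ℕ)+1 : ℕ) by push_cast; ring, zpow_neg, zpow_natCast, inv_pow]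
      rw [pow_succ]
      field_simp
    simp only [Complex.add_re, Complex.ofReal_re, Complex.mul_re, Complex.I_re,
      Complex.ofReal_im, Complex.I_im]
    ring_nf
    ring_nf at hzp
    convert hzp using 2 <;> ring
  -- put everything together
  calc (∫ θ in (0:ℝ)..(2*π), Real.exp (t * Real.cos θ) * Real.cos ((x:ℝ) * θ))
      = (-Complex.I * ∮ z in C(0, 1), f z).re := hA.symm
    _ = (-Complex.I * ∮ z in C(0, r), f z).re := by rw [heq]
    _ ≤ ‖-Complex.I * ∮ z in C(0, r), f z‖ := Complex.re_le_norm _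
    _ = ‖∮ z in C(0, r), f z‖ := by rw [norm_mul]; simp
    _ = ‖∮ z in C(0, r), f z‖ := rfl
    _ ≤ ∫ θ in (0:ℝ)..2*π, ‖deriv (circleMap 0 r) θ • f (circleMap 0 r θ)‖ := by
        rw [hOr]
        exact intervalIntegral.norm_integral_le_integral_norm (by positivity)
    _ = (r⁻¹)^x * ∫ θ in (0:ℝ)..(2*π), Real.exp ((t/2*(r+r⁻¹)) * Real.cos θ) := by
        rw [intervalIntegral.integral_congr hnorm_pt, intervalIntegral.integral_const_mul]

/-- For `t > 0` and integer `x ≥ 0`: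
`√t · e^{-t} · I_x(t) ≤ (t/(t+x))^{x/2} = (1 + x/t)^{-x/2}`. -/
theorem sqrt_mul_exp_mul_besselI_le (t : ℝ) (ht : 0 < t) (x : ℕ) :
    Real.sqrt t * Real.exp (-t) * besselI (x : ℤ) t ≤ (t / (t + x)) ^ ((x : ℝ) / 2) ∧
    (t / (t + x)) ^ ((x : ℝ) / 2) = (1 + (x : ℝ) / t) ^ (-(x : ℝ) / 2) := by
  have hX : (0:ℝ) ≤ (x:ℝ) := Nat.cast_nonneg x
  have hT : 0 < t + (x:ℝ) := by linarith
  have hdivpos : 0 < t/(t+(x:ℝ)) := div_pos ht hT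
  constructor
  · -- main inequality
    set r : ℝ := (t + (x:ℝ))/t with hrdef
    have hr1 : 1 ≤ r := by rw [hrdef, le_div_iff₀ ht]; linarith
    have hr0 : 0 < r := lt_of_lt_of_le one_pos hr1
    have hrinv : r⁻¹ = t/(t+(x:ℝ)) := by rw [hrdef, inv_div]
    set s : ℝ := t/2*(r+r⁻¹) with hsdef
    have hsval : s = t + (x:ℝ)^2/(2*(t+(x:ℝ))) := by
      rw [hsdef, hrdef, inv_div]
      field_simp
      ring
    have hs0 : 0 < s := by rw [hsval]; positivity
    have hts : t ≤ s := by
      have h0 : (0:ℝ) ≤ (x:ℝ)^2/(2*(t+(x:ℝ))) := by positivity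
      rw [hsval]; linarith
    -- bessel bound
    have hbound : besselI (x:ℤ) t ≤ (r⁻¹)^x * Real.exp s * (Real.sqrt (π/(2*s))/2) := by
      have h2B := annulus_bound t x hr1
      rw [besselI_reflect t x] at h2B
      have hre0 : (∫ θ in (0:ℝ)..(2*π), Real.exp (s * Real.cos θ))
          = 2 * ∫ θ in (0:ℝ)..π, Real.exp (s*Real.cos θ) := by
        simpa using besselI_reflect s 0
      rw [← hsdef, hre0] at h2B
      have hGauss := gauss_bound hs0
      have hrpow : (0:ℝ) ≤ (r⁻¹)^x := by positivity
      have hhalf : (∫ θ in (0:ℝ)..π, Real.exp (t * Real.cos θ) * Real.cos (((x:ℕ):ℝ) * θ))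
          ≤ (r⁻¹)^x * ∫ θ in (0:ℝ)..π, Real.exp (s*Real.cos θ) := by nlinarith
      have hfin : (∫ θ in (0:ℝ)..π, Real.exp (t * Real.cos θ) * Real.cos (((x:ℕ):ℝ) * θ))
          ≤ (r⁻¹)^x * (Real.exp s * (π * Real.sqrt (π/(2*s)) / 2)) :=
        hhalf.trans (mul_le_mul_of_nonneg_left hGauss hrpow)
      have hbI : besselI (x:ℤ) t
          = (1/π) * ∫ θ in (0:ℝ)..π, Real.exp (t * Real.cos θ) * Real.cos (((x:ℕ):ℝ) * θ) := by
        rw [besselI]; norm_num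
      rw [hbI]
      have hπ : 0 < π := Real.pi_pos
      calc (1/π) * ∫ θ in (0:ℝ)..π, Real.exp (t * Real.cos θ) * Real.cos (((x:ℕ):ℝ) * θ)
          ≤ (1/π) * ((r⁻¹)^x * (Real.exp s * (π * Real.sqrt (π/(2*s)) / 2))) := by
            apply mul_le_mul_of_nonneg_left hfin (by positivity)
        _ = (r⁻¹)^x * Real.exp s * (Real.sqrt (π/(2*s))/2) := by
            field_simp
    -- scalar computations
    set L : ℝ := Real.log ((t+(x:ℝ))/t) with hLdef
    have hL0 : 0 ≤ L := Real.log_nonneg (by rw [le_div_iff₀ ht]; linarith)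
    have hlog : Real.log (t/(t+(x:ℝ))) = -L := by
      rw [hLdef, ← Real.log_inv, inv_div]
    have hLX : (x:ℝ)/(t+(x:ℝ)) ≤ L := by
      have h := Real.log_le_sub_one_of_pos hdivpos
      rw [hlog] at h
      have h2 : t/(t+(x:ℝ)) - 1 = -((x:ℝ)/(t+(x:ℝ))) := by field_simp; ring
      linarith [h, h2]
    have hpow : (r⁻¹)^x = Real.exp (-((x:ℝ) * L)) := by
      rw [hrinv, ← Real.exp_log (pow_pos hdivpos x), Real.log_pow]
      congr 1
      rw [hlog]
      push_cast
      ring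
    have hrpoweq : (t/(t+(x:ℝ))) ^ (((x:ℝ))/2) = Real.exp (-L * ((x:ℝ)/2)) := by
      rw [Real.rpow_def_of_pos hdivpos, hlog]
    have hsqrt1 : Real.sqrt t * (Real.sqrt (π/(2*s))/2) ≤ 1 := by
      have hmul : Real.sqrt t * Real.sqrt (π/(2*s)) = Real.sqrt (t*(π/(2*s))) :=
        (Real.sqrt_mul ht.le _).symm
      have harg : t*(π/(2*s)) ≤ 4 := by
        rw [show t*(π/(2*s)) = t*π/(2*s) by ring, div_le_iff₀ (by positivity : (0:ℝ) < 2*s)]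
        linarith [mul_le_mul_of_nonneg_left Real.pi_le_four ht.le, hts, hs0]
      have h4 : Real.sqrt (t*(π/(2*s))) ≤ 2 := by
        have := Real.sqrt_le_sqrt harg
        rwa [show (4:ℝ) = 2^2 by norm_num, Real.sqrt_sq (by norm_num : (0:ℝ) ≤ 2)] at this
      have heq2 : Real.sqrt t * (Real.sqrt (π/(2*s))/2)
          = (Real.sqrt t * Real.sqrt (π/(2*s)))/2 := by ring
      rw [heq2, hmul]
      linarith
    have hexp_le : -t + -((x:ℝ)*L) + s ≤ -L * ((x:ℝ)/2) := by
      have h1 : (x:ℝ)^2/(2*(t+(x:ℝ))) ≤ ((x:ℝ)/2) * L := by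
        have := mul_le_mul_of_nonneg_left hLX (by positivity : (0:ℝ) ≤ (x:ℝ)/2)
        calc (x:ℝ)^2/(2*(t+(x:ℝ))) = ((x:ℝ)/2) * ((x:ℝ)/(t+(x:ℝ))) := by
              field_simp
          _ ≤ ((x:ℝ)/2) * L := this
      have hsub : s - t = (x:ℝ)^2/(2*(t+(x:ℝ))) := by rw [hsval]; ring
      linarith [h1, hsub]
    -- final chain
    calc Real.sqrt t * Real.exp (-t) * besselI (x:ℤ) t
        ≤ Real.sqrt t * Real.exp (-t) * ((r⁻¹)^x * Real.exp s * (Real.sqrt (π/(2*s))/2)) := by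
          apply mul_le_mul_of_nonneg_left hbound (by positivity)
      _ = (Real.sqrt t * (Real.sqrt (π/(2*s))/2)) *
            (Real.exp (-t) * Real.exp (-((x:ℝ)*L)) * Real.exp s) := by
          rw [hpow]; ring
      _ = (Real.sqrt t * (Real.sqrt (π/(2*s))/2)) * Real.exp (-t + -((x:ℝ)*L) + s) := by
          rw [← Real.exp_add, ← Real.exp_add]
      _ ≤ 1 * Real.exp (-L * ((x:ℝ)/2)) := by
          apply mul_le_mul hsqrt1 (Real.exp_le_exp.2 hexp_le) (Real.exp_pos _).le zero_le_one
      _ = (t/(t+(x:ℝ))) ^ (((x:ℝ))/2) := by rw [one_mul, hrpoweq]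
  · -- the rpow identity
    have ha : (0:ℝ) < 1 + (x:ℝ)/t := by positivity
    have h1 : t/(t+(x:ℝ)) = (1 + (x:ℝ)/t)⁻¹ := by
      rw [show 1 + (x:ℝ)/t = (t+(x:ℝ))/t by field_simp, inv_div]
    rw [h1, Real.inv_rpow ha.le, ← Real.rpow_neg ha.le, neg_div]
end

section
/- Let n(u) be a sequence of positive integers indexed by positive integers u such that n(u)/u → α for some real α > 0 as u → ∞. Then for every real t > 0 and every integer k ≥ 0, lim_{u→∞} n(u) · e^{−2u²t} · I_{n(u)·k}(2u²t) = (α/√(4πt)) · e^{−(αk)²/(4t)}. -/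
open Real Filter MeasureTheory

lemma aux_integral_cos_gaussian {a : ℝ} (ha : 0 < a) (b : ℝ) :
    ∫ x : ℝ, Real.cos (b * x) * Real.exp (-a * x ^ 2)
      = Real.sqrt (π / a) * Real.exp (-b ^ 2 / (4 * a)) := by
  have hre : 0 < (a : ℂ).re := by simpa using ha
  have key := fourierIntegral_gaussian hre (b : ℂ)
  have hint : Integrable (fun x : ℝ =>
      Complex.exp (Complex.I * (b:ℂ) * (x:ℂ)) * Complex.exp (-(a:ℂ) * (x:ℂ) ^ 2)) := by
    refine (integrable_cexp_quadratic hre (Complex.I * (b:ℂ)) 0).congr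
      (Filter.Eventually.of_forall fun x => ?_)
    simp only [← Complex.exp_add]
    ring_nf
  have hfun : ∀ x : ℝ,
      (Complex.exp (Complex.I * (b:ℂ) * (x:ℂ)) * Complex.exp (-(a:ℂ) * (x:ℂ) ^ 2)).re
      = Real.cos (b * x) * Real.exp (-a * x ^ 2) := by
    intro x
    have h1 : Complex.I * (b:ℂ) * (x:ℂ) = ((b * x : ℝ) : ℂ) * Complex.I := by push_cast; ring
    have h2 : -(a:ℂ) * (x:ℂ) ^ 2 = ((-a * x ^ 2 : ℝ) : ℂ) := by push_cast; ring
    rw [h1, h2, Complex.mul_re, Complex.exp_ofReal_mul_I_re, Complex.exp_ofReal_mul_I_im,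
      Complex.exp_ofReal_re, Complex.exp_ofReal_im]
    ring
  have hre_int := Complex.reCLM.integral_comp_comm hint
  simp only [Complex.reCLM_apply] at hre_int
  have hLHS : ∫ x : ℝ, Real.cos (b * x) * Real.exp (-a * x ^ 2)
      = (∫ x : ℝ, Complex.exp (Complex.I * (b:ℂ) * (x:ℂ))
          * Complex.exp (-(a:ℂ) * (x:ℂ) ^ 2)).re := by
    rw [← hre_int]
    exact integral_congr_ae (Filter.Eventually.of_forall fun x => (hfun x).symm)
  have hRHS : (((π:ℂ) / (a:ℂ)) ^ (1 / 2 : ℂ) * Complex.exp (-(b:ℂ) ^ 2 / (4 * (a:ℂ)))).re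
      = Real.sqrt (π / a) * Real.exp (-b ^ 2 / (4 * a)) := by
    have h1 : ((π:ℂ) / (a:ℂ)) = ((π / a : ℝ) : ℂ) := by push_cast; ring
    have h2 : (1 / 2 : ℂ) = ((1 / 2 : ℝ) : ℂ) := by norm_num
    have h3 : (-(b:ℂ) ^ 2 / (4 * (a:ℂ))) = ((-b ^ 2 / (4 * a) : ℝ) : ℂ) := by push_cast; ring
    rw [h1, h2, h3, ← Complex.ofReal_cpow (by positivity), ← Complex.ofReal_exp,
      ← Complex.ofReal_mul, Complex.ofReal_re, Real.sqrt_eq_rpow]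
  rw [hLHS, key, hRHS]

lemma aux_one_sub_cos (x : ℝ) : 1 - Real.cos x = 2 * Real.sin (x / 2) ^ 2 := by
  have h : Real.cos x = Real.cos (2 * (x / 2)) := by congr 1; ring
  rw [h, Real.cos_two_mul]
  have := Real.sin_sq_add_cos_sq (x / 2)
  nlinarith

lemma aux_sin_div : Tendsto (fun y : ℝ => Real.sin y / y) (nhdsWithin 0 {0}ᶜ) (nhds 1) := by
  have h : HasDerivAt Real.sin (Real.cos 0) 0 := Real.hasDerivAt_sin 0
  rw [hasDerivAt_iff_tendsto_slope] at h
  simpa [slope_fun_def, Real.sin_zero, Real.cos_zero, div_eq_inv_mul] using h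

/-- The re-scaled Bessel functions converge to the Euclidean heat kernel:
if `n(u)/u → α > 0`, then for `t > 0` and `k ≥ 0`,
`n(u)·e^{-2u²t}·I_{n(u)k}(2u²t) → (α/√(4πt))·e^{-(αk)²/(4t)}` as `u → ∞`. -/
theorem rescaled_besselI_tendsto_heat_kernel (n : ℕ → ℕ) (hn : ∀ u, 0 < n u) (α : ℝ)
    (hα : 0 < α) (hlim : Tendsto (fun u : ℕ => (n u : ℝ) / (u : ℝ)) atTop (nhds α))
    (t : ℝ) (ht : 0 < t) (k : ℕ) :
    Tendsto (fun u : ℕ =>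
        (n u : ℝ) * Real.exp (-(2 * (u : ℝ) ^ 2 * t)) *
          besselI ((n u : ℤ) * (k : ℤ)) (2 * (u : ℝ) ^ 2 * t))
      atTop
      (nhds (α / Real.sqrt (4 * Real.pi * t) * Real.exp (-(α * k) ^ 2 / (4 * t)))) := by
  have hNpos : ∀ u, (0:ℝ) < (n u : ℝ) := fun u => by exact_mod_cast hn u
  set s : ℕ → ℝ := fun u => 2 * (u:ℝ) ^ 2 * t with hs
  set g : ℕ → ℝ → ℝ := fun u φ =>
    Real.exp (s u * Real.cos (φ / (n u : ℝ)) - s u) * Real.cos ((k:ℝ) * φ) with hg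
  set F : ℕ → ℝ → ℝ := fun u => (Set.Ioc (0:ℝ) ((n u : ℝ) * π)).indicator (g u) with hF
  set H : ℝ → ℝ := fun φ => Real.exp (-(t / α ^ 2) * φ ^ 2) * Real.cos ((k:ℝ) * φ) with hH
  set f : ℝ → ℝ := fun φ => (Set.Ioi (0:ℝ)).indicator H φ with hf
  -- Step A: rewrite each term as (1/π) * ∫ F u
  have hA : ∀ u, (n u : ℝ) * Real.exp (-(s u)) * besselI ((n u : ℤ) * (k : ℤ)) (s u)
      = (1 / π) * ∫ φ : ℝ, F u φ := by
    intro u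
    have hN := hNpos u
    have hsub := intervalIntegral.integral_comp_div (a := 0) (b := (n u : ℝ) * π)
      (c := (n u : ℝ))
      (f := fun θ => Real.exp (s u * Real.cos θ - s u) * Real.cos ((n u : ℝ) * (k:ℝ) * θ))
      hN.ne'
    rw [zero_div, mul_div_cancel_left₀ _ hN.ne', smul_eq_mul] at hsub
    have hgeq : ∀ φ : ℝ, g u φ
        = Real.exp (s u * Real.cos (φ / (n u : ℝ)) - s u)
            * Real.cos ((n u : ℝ) * (k:ℝ) * (φ / (n u : ℝ))) := by
      intro φ
      have harg : (n u : ℝ) * (k:ℝ) * (φ / (n u : ℝ)) = (k:ℝ) * φ := by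
        field_simp
      rw [hg, harg]
    have h1 : ∫ φ : ℝ, F u φ = ∫ φ in (0:ℝ)..((n u : ℝ) * π), g u φ := by
      rw [hF, integral_indicator measurableSet_Ioc,
        intervalIntegral.integral_of_le (by positivity)]
    have h2 : (∫ φ in (0:ℝ)..((n u : ℝ) * π), g u φ)
        = (n u : ℝ) * ∫ θ in (0:ℝ)..π,
            Real.exp (s u * Real.cos θ - s u) * Real.cos ((n u : ℝ) * (k:ℝ) * θ) := by
      rw [← hsub]
      exact intervalIntegral.integral_congr fun φ _ => hgeq φ
    have h3 : (∫ θ in (0:ℝ)..π,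
          Real.exp (s u * Real.cos θ - s u) * Real.cos ((n u : ℝ) * (k:ℝ) * θ))
        = Real.exp (-(s u)) * ∫ θ in (0:ℝ)..π,
            Real.exp (s u * Real.cos θ) * Real.cos ((n u : ℝ) * (k:ℝ) * θ) := by
      rw [← intervalIntegral.integral_const_mul]
      refine intervalIntegral.integral_congr fun θ _ => ?_
      rw [Real.exp_sub, Real.exp_neg]
      ring
    rw [h1, h2, h3, besselI]
    push_cast
    ring
  -- limits of N and ratios
  have hNtop : Tendsto (fun u => (n u : ℝ)) atTop atTop := by
    have h1 : ∀ᶠ u : ℕ in atTop, α / 2 * (u:ℝ) ≤ (n u : ℝ) := by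
      have h2 : ∀ᶠ u : ℕ in atTop, α / 2 < (n u : ℝ) / (u:ℝ) :=
        hlim.eventually (eventually_gt_nhds (by linarith))
      filter_upwards [h2, eventually_gt_atTop 0] with u hu hu0
      have hu0' : (0:ℝ) < (u:ℝ) := by exact_mod_cast hu0
      rw [lt_div_iff₀ hu0'] at hu
      linarith
    exact tendsto_atTop_mono' atTop h1
      (Tendsto.const_mul_atTop (by linarith : (0:ℝ) < α / 2)
        (tendsto_natCast_atTop_atTop (R := ℝ)))
  have hinv : Tendsto (fun u : ℕ => (u:ℝ) / (n u : ℝ)) atTop (nhds α⁻¹) := by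
    have := hlim.inv₀ hα.ne'
    simpa [inv_div] using this
  have hratio : Tendsto (fun u => s u / (n u : ℝ) ^ 2) atTop (nhds (2 * t / α ^ 2)) := by
    have h1 : Tendsto (fun u : ℕ => 2 * t * ((u:ℝ) / (n u : ℝ)) ^ 2) atTop
        (nhds (2 * t * (α⁻¹) ^ 2)) := ((hinv.pow 2).const_mul _)
    have h2 : (2 * t * (α⁻¹) ^ 2) = 2 * t / α ^ 2 := by field_simp
    rw [h2] at h1
    refine h1.congr fun u => ?_
    rw [hs, div_pow]
    have := (hNpos u).ne'
    field_simp
  -- dominated convergence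
  have hbc : (0:ℝ) < 2 * t / (α ^ 2 * π ^ 2) := by positivity
  have hDCT : Tendsto (fun u => ∫ φ : ℝ, F u φ) atTop (nhds (∫ φ : ℝ, f φ)) := by
    refine tendsto_integral_filter_of_dominated_convergence
      (fun φ => Real.exp (-(2 * t / (α ^ 2 * π ^ 2)) * φ ^ 2)) ?_ ?_ ?_ ?_
    · refine Filter.Eventually.of_forall fun u => ?_
      have hc : Continuous (g u) := by
        rw [hg]
        fun_prop
      exact (hc.aestronglyMeasurable).indicator measurableSet_Ioc
    · have hev : ∀ᶠ u in atTop, t / α ^ 2 < s u / (n u : ℝ) ^ 2 :=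
        hratio.eventually (eventually_gt_nhds (by
          have h0 : 0 < t / α ^ 2 := by positivity
          rw [show 2 * t / α ^ 2 = 2 * (t / α ^ 2) by ring]
          linarith))
      filter_upwards [hev] with u hu
      refine Filter.Eventually.of_forall fun φ => ?_
      by_cases hφ : φ ∈ Set.Ioc (0:ℝ) ((n u : ℝ) * π)
      · rw [hF]
        simp only [Set.indicator_of_mem hφ]
        have hN := hNpos u
        set x := φ / (n u : ℝ) with hx
        have hx0 : 0 < x := div_pos hφ.1 hN
        have hxπ : x ≤ π := by
          rw [hx, div_le_iff₀ hN]
          linarith [hφ.2]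
        have hsin : x / π ≤ Real.sin (x / 2) := by
          have := Real.mul_le_sin (x := x / 2) (by linarith) (by linarith)
          calc x / π = 2 / π * (x / 2) := by field_simp
          _ ≤ Real.sin (x / 2) := this
        have hcos : 2 * (x / π) ^ 2 ≤ 1 - Real.cos x := by
          rw [aux_one_sub_cos x]
          have h0 : 0 ≤ x / π := by positivity
          nlinarith
        have hs0 : 0 ≤ s u := by rw [hs]; positivity
        have key : 2 * t / (α ^ 2 * π ^ 2) * φ ^ 2 ≤ s u * (1 - Real.cos x) := by
          have e1 : s u * (2 * (x / π) ^ 2) ≤ s u * (1 - Real.cos x) :=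
            mul_le_mul_of_nonneg_left hcos hs0
          have e2 : s u * (2 * (x / π) ^ 2) = s u / (n u : ℝ) ^ 2 * (2 * φ ^ 2 / π ^ 2) := by
            rw [hx]
            field_simp [hN.ne']
          have e3 : t / α ^ 2 * (2 * φ ^ 2 / π ^ 2)
              ≤ s u / (n u : ℝ) ^ 2 * (2 * φ ^ 2 / π ^ 2) :=
            mul_le_mul_of_nonneg_right hu.le (by positivity)
          have e4 : 2 * t / (α ^ 2 * π ^ 2) * φ ^ 2 = t / α ^ 2 * (2 * φ ^ 2 / π ^ 2) := by
            field_simp [hα.ne', Real.pi_ne_zero]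
          linarith
        have habs : ‖Real.exp (s u * Real.cos x - s u) * Real.cos ((k:ℝ) * φ)‖
            ≤ Real.exp (s u * Real.cos x - s u) := by
          rw [Real.norm_eq_abs, abs_mul, abs_of_pos (Real.exp_pos _)]
          exact mul_le_of_le_one_right (Real.exp_pos _).le (Real.abs_cos_le_one _)
        refine habs.trans (Real.exp_le_exp.2 ?_)
        nlinarith
      · rw [hF]
        simp only [Set.indicator_of_notMem hφ, norm_zero]
        positivity
    · exact integrable_exp_neg_mul_sq hbc
    · refine Filter.Eventually.of_forall fun φ => ?_
      rcases le_or_gt φ 0 with hφ | hφ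
      · have h1 : ∀ u, F u φ = 0 := fun u =>
          Set.indicator_of_notMem (fun h => absurd h.1 (not_lt.2 hφ)) _
        have h2 : f φ = 0 := Set.indicator_of_notMem (by simpa using hφ) _
        simp only [h1, h2]
        exact tendsto_const_nhds
      · -- φ > 0
        have hev : ∀ᶠ u in atTop, F u φ = g u φ := by
          have hmul : Tendsto (fun u => (n u : ℝ) * π) atTop atTop :=
            hNtop.atTop_mul_const pi_pos
          filter_upwards [hmul.eventually_ge_atTop φ] with u hu
          exact Set.indicator_of_mem (Set.mem_Ioc.mpr ⟨hφ, hu⟩) _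
        have hy : Tendsto (fun u => φ / (2 * (n u : ℝ))) atTop (nhdsWithin 0 {0}ᶜ) := by
          rw [tendsto_nhdsWithin_iff]
          constructor
          · exact Tendsto.div_atTop tendsto_const_nhds (hNtop.const_mul_atTop two_pos)
          · refine Filter.Eventually.of_forall fun u => ?_
            have := hNpos u
            simp only [Set.mem_compl_iff, Set.mem_singleton_iff]
            positivity
        have hsi : Tendsto (fun u =>
            Real.sin (φ / (2 * (n u : ℝ))) / (φ / (2 * (n u : ℝ)))) atTop (nhds 1) :=
          aux_sin_div.comp hy
        have hns : Tendsto (fun u => (n u : ℝ) * Real.sin (φ / (2 * (n u : ℝ)))) atTop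
            (nhds (φ / 2)) := by
          have h1 := hsi.const_mul (φ / 2)
          rw [mul_one] at h1
          refine h1.congr fun u => ?_
          have hN := (hNpos u).ne'
          have hφ' := hφ.ne'
          field_simp
        have hsq : Tendsto (fun u => 2 * ((n u : ℝ) * Real.sin (φ / (2 * (n u : ℝ)))) ^ 2)
            atTop (nhds (2 * (φ / 2) ^ 2)) := (hns.pow 2).const_mul 2
        have hE : Tendsto (fun u => s u * (1 - Real.cos (φ / (n u : ℝ)))) atTop
            (nhds (t / α ^ 2 * φ ^ 2)) := by
          have h1 := hratio.mul hsq
          have h2 : 2 * t / α ^ 2 * (2 * (φ / 2) ^ 2) = t / α ^ 2 * φ ^ 2 := by ring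
          rw [h2] at h1
          refine h1.congr fun u => ?_
          rw [aux_one_sub_cos]
          have hN := (hNpos u).ne'
          have h3 : φ / (n u : ℝ) / 2 = φ / (2 * (n u : ℝ)) := by
            rw [div_div, mul_comm]
          rw [h3]
          field_simp
        have hgφ : Tendsto (fun u => g u φ) atTop (nhds (H φ)) := by
          have h1 : Tendsto (fun u => Real.exp (-(s u * (1 - Real.cos (φ / (n u : ℝ))))))
              atTop (nhds (Real.exp (-(t / α ^ 2 * φ ^ 2)))) :=
            (Real.continuous_exp.tendsto _).comp hE.neg
          have h2 := h1.mul_const (Real.cos ((k:ℝ) * φ))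
          have h3 : Real.exp (-(t / α ^ 2 * φ ^ 2)) * Real.cos ((k:ℝ) * φ) = H φ := by
            rw [hH]
            ring_nf
          rw [h3] at h2
          refine h2.congr fun u => ?_
          rw [hg]
          ring_nf
        have hfφ : f φ = H φ := Set.indicator_of_mem hφ _
        rw [hfφ]
        exact hgφ.congr' (by filter_upwards [hev] with u hu using hu.symm)
  -- final identification of the limit
  have hval : (1 / π) * ∫ φ : ℝ, f φ
      = α / Real.sqrt (4 * π * t) * Real.exp (-(α * k) ^ 2 / (4 * t)) := by
    have hta : 0 < t / α ^ 2 := by positivity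
    have habs : ∀ x : ℝ, H |x| = H x := by
      intro x
      rw [hH]
      simp only
      rw [sq_abs, ← abs_of_nonneg (by positivity : (0:ℝ) ≤ (k:ℝ)), ← abs_mul, Real.cos_abs,
        abs_of_nonneg (by positivity : (0:ℝ) ≤ (k:ℝ))]
    have h1 : ∫ φ : ℝ, f φ = ∫ φ in Set.Ioi (0:ℝ), H φ := by
      rw [hf]
      exact integral_indicator measurableSet_Ioi
    have h2 : (∫ x : ℝ, H x) = 2 * ∫ φ in Set.Ioi (0:ℝ), H φ := by
      rw [← integral_comp_abs (f := H)]
      exact integral_congr_ae (Filter.Eventually.of_forall fun x => (habs x).symm)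
    have h3 : (∫ x : ℝ, H x) = Real.sqrt (π / (t / α ^ 2))
        * Real.exp (-(k:ℝ) ^ 2 / (4 * (t / α ^ 2))) := by
      rw [← aux_integral_cos_gaussian hta (k:ℝ)]
      refine integral_congr_ae (Filter.Eventually.of_forall fun x => ?_)
      rw [hH]
      ring
    have hexp : -(k:ℝ) ^ 2 / (4 * (t / α ^ 2)) = -(α * (k:ℝ)) ^ 2 / (4 * t) := by
      field_simp
    have hsq1 : Real.sqrt (π / (t / α ^ 2)) = α * Real.sqrt π / Real.sqrt t := by
      rw [show π / (t / α ^ 2) = α ^ 2 * (π / t) by field_simp,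
        Real.sqrt_mul (sq_nonneg α), Real.sqrt_sq hα.le, Real.sqrt_div pi_pos.le,
        mul_div_assoc]
    have hsq2 : Real.sqrt (4 * π * t) = 2 * (Real.sqrt π * Real.sqrt t) := by
      rw [show (4:ℝ) * π * t = (2 * (Real.sqrt π * Real.sqrt t)) ^ 2 by
        rw [mul_pow, mul_pow, Real.sq_sqrt pi_pos.le, Real.sq_sqrt ht.le]; ring]
      exact Real.sqrt_sq (by positivity)
    rw [h1, show (∫ φ in Set.Ioi (0:ℝ), H φ) = (∫ x : ℝ, H x) / 2 by rw [h2]; ring,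
      h3, hexp, hsq1, hsq2]
    have hπs : (0:ℝ) < Real.sqrt π := Real.sqrt_pos.2 pi_pos
    have hts : (0:ℝ) < Real.sqrt t := Real.sqrt_pos.2 ht
    have hππ : Real.sqrt π * Real.sqrt π = π := Real.mul_self_sqrt pi_pos.le
    have hcoef : 1 / π * (α * Real.sqrt π / Real.sqrt t / 2)
        = α / (2 * (Real.sqrt π * Real.sqrt t)) := by
      field_simp
      linear_combination hππ
    calc 1 / π * (α * Real.sqrt π / Real.sqrt t * Real.exp (-(α * (k:ℝ)) ^ 2 / (4 * t)) / 2)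
        = (1 / π * (α * Real.sqrt π / Real.sqrt t / 2))
            * Real.exp (-(α * (k:ℝ)) ^ 2 / (4 * t)) := by ring
      _ = α / (2 * (Real.sqrt π * Real.sqrt t)) * Real.exp (-(α * (k:ℝ)) ^ 2 / (4 * t)) := by
          rw [hcoef]
  rw [← hval]
  exact ((tendsto_const_nhds.mul hDCT).congr fun u => (hA u).symm)
end
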